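/- arXiv:1406.0885 — 3 statements merged into one kernel-verified Lean document; each statement's English description precedes it below -/
import Mathlib

section
/- Let (M_t)_{t≥0} be a continuous uniformly integrable martingale with terminal value M_∞ ~ μ and running maximum M̄_∞ = sup_{t≤∞} M_t. If P(M̄_∞ = b̄) > 0 for some b̄, then almost surely on the event {M̄_∞ = b̄} we have M_t = b̄ for all t ≥ H_{b̄} (where H_{b̄} is the first hitting time of b̄); in particular {M̄_∞ = b̄} ⊆ {M_∞ = b̄} a.s. and μ({b̄}) ≥ P(M̄_∞ = b̄). -/
open MeasureTheory Set Filter Topology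
open scoped NNReal ENNReal Classical

namespace Stmt16Aux

variable {Ω : Type*} {m0 : MeasurableSpace Ω}

/-- grid point `k / 2^n` in `ℝ≥0`. -/
noncomputable def gr (n k : ℕ) : ℝ≥0 := (k : ℝ≥0) / 2 ^ n

lemma gr_mono {n : ℕ} : Monotone (gr n) := fun k l hkl => by
  unfold gr
  exact div_le_div_of_nonneg_right (by exact_mod_cast hkl) (by positivity)

lemma gr_top (n N : ℕ) : gr n (N * 2 ^ n) = (N : ℝ≥0) := by
  unfold gr
  rw [Nat.cast_mul, Nat.cast_pow, Nat.cast_ofNat]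
  field_simp

lemma lt_gr_floor_succ (n : ℕ) (x : ℝ≥0) : x < gr n (⌊x * 2 ^ n⌋₊ + 1) := by
  unfold gr
  rw [lt_div_iff₀ (by positivity : (0:ℝ≥0) < 2 ^ n)]
  exact_mod_cast Nat.lt_floor_add_one (x * 2 ^ n)

lemma gr_floor_succ_le (n : ℕ) (x : ℝ≥0) : gr n (⌊x * 2 ^ n⌋₊ + 1) ≤ x + (2 ^ n)⁻¹ := by
  unfold gr
  rw [div_le_iff₀ (by positivity : (0:ℝ≥0) < 2 ^ n), add_mul, inv_mul_cancel₀
    (by positivity : (2:ℝ≥0) ^ n ≠ 0)]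
  push_cast
  exact add_le_add_left (Nat.floor_le zero_le) 1

lemma floor_succ_le_top {n N : ℕ} {x : ℝ≥0} (hx : x < N) : ⌊x * 2 ^ n⌋₊ + 1 ≤ N * 2 ^ n := by
  have h1 : (⌊x * 2 ^ n⌋₊ : ℝ≥0) < ((N * 2 ^ n : ℕ) : ℝ≥0) := by
    calc (⌊x * 2 ^ n⌋₊ : ℝ≥0) ≤ x * 2 ^ n := Nat.floor_le zero_le
    _ < (N : ℝ≥0) * 2 ^ n := mul_lt_mul_of_pos_right hx (by positivity)
    _ = ((N * 2 ^ n : ℕ) : ℝ≥0) := by push_cast; ring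
  exact_mod_cast h1

/-- first `k ≤ K` such that `ω ∈ 𝒜 k`, defaulting to `K`. -/
noncomputable def ft (𝒜 : ℕ → Set Ω) (K : ℕ) (ω : Ω) : ℕ :=
  if h : ∃ k, k ≤ K ∧ ω ∈ 𝒜 k then Nat.find h else K

lemma ft_le (𝒜 : ℕ → Set Ω) (K : ℕ) (ω : Ω) : ft 𝒜 K ω ≤ K := by
  unfold ft
  split_ifs with h
  · obtain ⟨k, hk, hm⟩ := h
    exact (Nat.find_le ⟨hk, hm⟩).trans hk
  · exact le_rfl

lemma ft_le_of_mem {𝒜 : ℕ → Set Ω} {K k : ℕ} {ω : Ω} (hk : k ≤ K) (hmem : ω ∈ 𝒜 k) :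
    ft 𝒜 K ω ≤ k := by
  unfold ft
  rw [dif_pos ⟨k, hk, hmem⟩]
  exact Nat.find_le ⟨hk, hmem⟩

lemma ft_mem_or {𝒜 : ℕ → Set Ω} {K : ℕ} (ω : Ω) :
    ω ∈ 𝒜 (ft 𝒜 K ω) ∨ (∀ k ≤ K, ω ∉ 𝒜 k) := by
  unfold ft
  split_ifs with h
  · exact Or.inl (Nat.find_spec h).2
  · push_neg at h
    exact Or.inr h

lemma ft_eq_of_not {𝒜 : ℕ → Set Ω} {K : ℕ} {ω : Ω} (h : ∀ k ≤ K, ω ∉ 𝒜 k) :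
    ft 𝒜 K ω = K := by
  unfold ft
  rw [dif_neg]
  push_neg
  exact h

lemma ft_min {𝒜 : ℕ → Set Ω} {K l : ℕ} {ω : Ω} (hl : l < ft 𝒜 K ω) (hlK : l ≤ K) :
    ω ∉ 𝒜 l := fun hmem => absurd (ft_le_of_mem hlK hmem) (not_le.mpr hl)

lemma ft_eq_char (𝒜 : ℕ → Set Ω) (K k : ℕ) (hk : k ≤ K) :
    {ω | ft 𝒜 K ω = k} =
      (if k = K then Set.univ else 𝒜 k) ∩ ⋂ l ∈ Finset.range k, (𝒜 l)ᶜ := by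
  ext ω
  simp only [Set.mem_setOf_eq, Set.mem_inter_iff, Set.mem_iInter, Finset.mem_range,
    Set.mem_compl_iff]
  constructor
  · rintro rfl
    refine ⟨?_, fun l hl => ft_min hl ((le_of_lt hl).trans (ft_le 𝒜 K ω))⟩
    by_cases hKk : ft 𝒜 K ω = K
    · simp [hKk]
    · rw [if_neg hKk]
      rcases ft_mem_or (𝒜 := 𝒜) (K := K) ω with h | h
      · exact h
      · exact absurd (ft_eq_of_not h) hKk
  · rintro ⟨h1, h2⟩
    by_cases hKk : k = K
    · subst hKk
      refine le_antisymm (ft_le 𝒜 k ω) (le_of_not_gt fun hlt => ?_)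
      rcases ft_mem_or (𝒜 := 𝒜) (K := k) ω with h | h
      · exact h2 _ hlt h
      · exact absurd (ft_eq_of_not h) (ne_of_lt hlt)
    · rw [if_neg hKk] at h1
      refine le_antisymm (ft_le_of_mem hk h1) (le_of_not_gt fun hlt => ?_)
      rcases ft_mem_or (𝒜 := 𝒜) (K := K) ω with h | h
      · exact h2 _ hlt h
      · exact h k hk h1



lemma gr_strictMono (n : ℕ) : StrictMono (gr n) := fun a b h => by
  unfold gr
  rw [div_eq_mul_inv, div_eq_mul_inv]
  exact mul_lt_mul_of_pos_right (by exact_mod_cast h) (by positivity)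

variable {ℱ : Filtration ℝ≥0 m0}

lemma measurableSet_ft_eq {𝒜 : ℕ → Set Ω} {n K : ℕ}
    (h𝒜 : ∀ k, MeasurableSet[ℱ (gr n k)] (𝒜 k)) {k : ℕ} (hk : k ≤ K) :
    MeasurableSet[ℱ (gr n k)] {ω | ft 𝒜 K ω = k} := by
  rw [ft_eq_char 𝒜 K k hk]
  refine MeasurableSet.inter ?_ ?_
  · split_ifs
    · exact MeasurableSet.univ
    · exact h𝒜 k
  · exact Finset.measurableSet_biInter _ fun l hl =>
      (ℱ.mono (gr_mono (le_of_lt (Finset.mem_range.mp hl))) _ ((h𝒜 l).compl))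

lemma isStoppingTime_grid {𝒜 : ℕ → Set Ω} {n K : ℕ}
    (h𝒜 : ∀ k, MeasurableSet[ℱ (gr n k)] (𝒜 k)) :
    IsStoppingTime ℱ (fun ω => gr n (ft 𝒜 K ω)) := by
  intro i
  have heq : {ω | gr n (ft 𝒜 K ω) ≤ i}
      = ⋃ (k : ℕ) (_ : k ≤ K ∧ gr n k ≤ i), {ω | ft 𝒜 K ω = k} := by
    ext ω
    simp only [Set.mem_setOf_eq, Set.mem_iUnion]
    constructor
    · intro h
      exact ⟨ft 𝒜 K ω, ⟨ft_le _ _ _, h⟩, rfl⟩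
    · rintro ⟨k, ⟨_, hki⟩, hft⟩
      rw [hft]
      exact hki
  simp only [WithTop.coe_le_coe]
  rw [heq]
  exact MeasurableSet.iUnion fun k => MeasurableSet.iUnion fun hk =>
    (ℱ.mono hk.2 _ (measurableSet_ft_eq h𝒜 hk.1))

section Defs

variable (M : ℝ≥0 → Ω → ℝ) (ub ε δ' : ℝ) (N m n : ℕ)

/-- first grid-`m` hitting time of `{x | ub - ε < x}`, capped at `N`. -/
noncomputable def σs : Ω → ℝ≥0 :=
  fun ω => gr m (ft (fun k => {ω' | ub - ε < M (gr m k) ω'}) (N * 2 ^ m) ω)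

/-- the set of (continuous) times after `σs` at which `M` exits the band. -/
def Sset (ω : Ω) : Set ℝ≥0 :=
  {t | σs M ub ε N m ω ≤ t ∧ (M t ω < ub - δ' ∨ ub + ε < M t ω)}

/-- the exit time of the band after `σs`, capped at `N`. -/
noncomputable def τd : Ω → ℝ≥0 :=
  fun ω => sInf (Sset M ub ε δ' N m ω ∪ {(N : ℝ≥0)})

/-- grid-`n` approximation from above of `τd`. -/
noncomputable def τn : Ω → ℝ≥0 :=
  fun ω => gr n (ft (fun k => {ω' | τd M ub ε δ' N m ω' < gr n k}) (N * 2 ^ n) ω)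

variable {M ub ε δ' N m n}

lemma σs_le : σs M ub ε N m ω ≤ (N : ℝ≥0) :=
  le_trans (gr_mono (ft_le _ _ _)) (le_of_eq (gr_top m N))

lemma range_σs_countable :
    (Set.range (fun ω => (σs M ub ε N m ω : WithTop ℝ≥0))).Countable :=
  ((Set.countable_range (gr m)).image WithTop.some).mono
    (by rintro _ ⟨ω, rfl⟩; exact ⟨σs M ub ε N m ω, ⟨_, rfl⟩, rfl⟩)

lemma range_τn_countable :
    (Set.range (fun ω => (τn M ub ε δ' N m n ω : WithTop ℝ≥0))).Countable :=
  ((Set.countable_range (gr n)).image WithTop.some).mono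
    (by rintro _ ⟨ω, rfl⟩; exact ⟨τn M ub ε δ' N m n ω, ⟨_, rfl⟩, rfl⟩)

lemma isStoppingTime_σs (hadp : Adapted ℱ M) :
    IsStoppingTime ℱ (fun ω => (σs M ub ε N m ω : WithTop ℝ≥0)) :=
  isStoppingTime_grid fun k =>
    measurableSet_lt measurable_const (hadp (gr m k))

lemma σs_le_τd {ω : Ω} : σs M ub ε N m ω ≤ τd M ub ε δ' N m ω := by
  refine le_csInf ⟨(N : ℝ≥0), Or.inr rfl⟩ ?_
  rintro x (hx | hx)
  · exact hx.1
  · rw [Set.mem_singleton_iff] at hx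
    rw [hx]
    exact σs_le

lemma τd_le_N {ω : Ω} : τd M ub ε δ' N m ω ≤ (N : ℝ≥0) :=
  csInf_le (OrderBot.bddBelow _) (Or.inr rfl)

lemma τd_le_of_mem {ω : Ω} {t : ℝ≥0} (ht : t ∈ Sset M ub ε δ' N m ω) :
    τd M ub ε δ' N m ω ≤ t :=
  csInf_le (OrderBot.bddBelow _) (Or.inl ht)

lemma not_mem_S_of_lt_τd {ω : Ω} {u : ℝ≥0} (hu : u < τd M ub ε δ' N m ω) :
    u ∉ Sset M ub ε δ' N m ω :=
  fun hm => absurd (τd_le_of_mem hm) (not_le.mpr hu)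

lemma τn_bounds (ω : Ω) :
    τd M ub ε δ' N m ω ≤ τn M ub ε δ' N m n ω ∧
      τn M ub ε δ' N m n ω ≤ τd M ub ε δ' N m ω + ((2 : ℝ≥0) ^ n)⁻¹ := by
  set t := τd M ub ε δ' N m ω with ht
  have htN : t ≤ (N : ℝ≥0) := τd_le_N
  rcases ft_mem_or (𝒜 := fun k => {ω' | τd M ub ε δ' N m ω' < gr n k}) (K := N * 2 ^ n) ω
    with h | h
  · rcases lt_or_ge t (N : ℝ≥0) with htlt | htge
    · have hk0 : ⌊t * 2 ^ n⌋₊ + 1 ≤ N * 2 ^ n := floor_succ_le_top htlt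
      have hmem : ω ∈ {ω' | τd M ub ε δ' N m ω' < gr n (⌊t * 2 ^ n⌋₊ + 1)} :=
        lt_gr_floor_succ n t
      refine ⟨le_of_lt h, ?_⟩
      calc τn M ub ε δ' N m n ω ≤ gr n (⌊t * 2 ^ n⌋₊ + 1) :=
            gr_mono (ft_le_of_mem hk0 hmem)
        _ ≤ t + (2 ^ n)⁻¹ := gr_floor_succ_le n t
    · exfalso
      have : t < gr n (ft (fun k => {ω' | τd M ub ε δ' N m ω' < gr n k}) (N * 2 ^ n) ω) := h
      have hle : gr n (ft (fun k => {ω' | τd M ub ε δ' N m ω' < gr n k}) (N * 2 ^ n) ω)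
          ≤ (N : ℝ≥0) := le_trans (gr_mono (ft_le _ _ _)) (le_of_eq (gr_top n N))
      exact absurd (lt_of_lt_of_le this hle) (not_lt.mpr htge)
  · have hτn : τn M ub ε δ' N m n ω = (N : ℝ≥0) := by
      unfold τn
      rw [ft_eq_of_not h, gr_top]
    have htN' : t = (N : ℝ≥0) := by
      refine le_antisymm htN (le_of_not_gt fun htlt => ?_)
      exact h _ (floor_succ_le_top htlt) (lt_gr_floor_succ n t)
    rw [hτn, ← htN']
    exact ⟨le_rfl, le_self_add⟩

lemma τn_le_N (ω : Ω) : τn M ub ε δ' N m n ω ≤ (N : ℝ≥0) :=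
  le_trans (gr_mono (ft_le _ _ _)) (le_of_eq (gr_top n N))

lemma σs_le_τn (ω : Ω) : σs M ub ε N m ω ≤ τn M ub ε δ' N m n ω :=
  le_trans σs_le_τd (τn_bounds ω).1


lemma measurableSet_τd_lt (hadp : Adapted ℱ M) (hcont : ∀ ω, Continuous fun t => M t ω)
    (u : ℝ≥0) : MeasurableSet[ℱ u] {ω | τd M ub ε δ' N m ω < u} := by
  obtain ⟨D, hDc, hDd⟩ := TopologicalSpace.exists_countable_dense ℝ≥0
  have hset : {ω | τd M ub ε δ' N m ω < u} =
      {ω : Ω | (N : ℝ≥0) < u} ∪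
      (⋃ (k : ℕ) (_ : k ≤ N * 2 ^ m ∧ gr m k < u),
        ({ω | σs M ub ε N m ω = gr m k} ∩
          {ω | M (gr m k) ω < ub - δ' ∨ ub + ε < M (gr m k) ω})) ∪
      (⋃ d ∈ {d : ℝ≥0 | d ∈ D ∧ d < u},
        ({ω | σs M ub ε N m ω ≤ d} ∩ {ω | M d ω < ub - δ' ∨ ub + ε < M d ω})) := by
    ext ω
    simp only [Set.mem_union, Set.mem_setOf_eq, Set.mem_iUnion, Set.mem_inter_iff,
      exists_prop]
    constructor
    · intro h
      have hne : (Sset M ub ε δ' N m ω ∪ {(N : ℝ≥0)}).Nonempty := ⟨_, Or.inr rfl⟩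
      rw [τd] at h
      rw [csInf_lt_iff (OrderBot.bddBelow _) hne] at h
      obtain ⟨x, hx | hx, hxu⟩ := h
      · rcases eq_or_lt_of_le hx.1 with heq | hlt
        · refine Or.inl (Or.inr ⟨ft (fun k => {ω' | ub - ε < M (gr m k) ω'}) (N * 2 ^ m) ω,
            ⟨ft_le _ _ _, ?_⟩, rfl, ?_⟩)
          · have : σs M ub ε N m ω = gr m (ft (fun k => {ω' | ub - ε < M (gr m k) ω'})
              (N * 2 ^ m) ω) := rfl
            rw [← this, heq]
            exact hxu
          · have : σs M ub ε N m ω = gr m (ft (fun k => {ω' | ub - ε < M (gr m k) ω'})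
              (N * 2 ^ m) ω) := rfl
            rw [← this, heq]
            exact hx.2
        · have hWopen : IsOpen (Set.Ioo (σs M ub ε N m ω) u ∩
              {v : ℝ≥0 | M v ω < ub - δ' ∨ ub + ε < M v ω}) := by
            refine isOpen_Ioo.inter ?_
            have hrw : {v : ℝ≥0 | M v ω < ub - δ' ∨ ub + ε < M v ω} =
                (fun v => M v ω) ⁻¹' (Set.Iio (ub - δ') ∪ Set.Ioi (ub + ε)) := by
              ext v
              simp [Set.mem_union]
            rw [hrw]
            exact (isOpen_Iio.union isOpen_Ioi).preimage (hcont ω)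
          obtain ⟨d, hdD, hdW⟩ := hDd.exists_mem_open hWopen ⟨x, ⟨hlt, hxu⟩, hx.2⟩
          exact Or.inr ⟨d, ⟨hdD, hdW.1.2⟩, le_of_lt hdW.1.1, hdW.2⟩
      · rw [Set.mem_singleton_iff] at hx
        rw [hx] at hxu
        exact Or.inl (Or.inl hxu)
    · intro h
      have hne : (Sset M ub ε δ' N m ω ∪ {(N : ℝ≥0)}).Nonempty := ⟨_, Or.inr rfl⟩
      rw [τd, csInf_lt_iff (OrderBot.bddBelow _) hne]
      rcases h with (h | ⟨k, ⟨_, hku⟩, hσ, hout⟩) | ⟨d, ⟨_, hdu⟩, hσ, hout⟩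
      · exact ⟨(N : ℝ≥0), Or.inr rfl, h⟩
      · exact ⟨gr m k, Or.inl ⟨hσ.le, hout⟩, hku⟩
      · exact ⟨d, Or.inl ⟨hσ, hout⟩, hdu⟩
  rw [hset]
  refine MeasurableSet.union (MeasurableSet.union ?_ ?_) ?_
  · exact MeasurableSet.const _
  · refine MeasurableSet.iUnion fun k => MeasurableSet.iUnion fun hk => ?_
    refine ℱ.mono (le_of_lt hk.2) _ (MeasurableSet.inter ?_ ?_)
    · have hrw : {ω | σs M ub ε N m ω = gr m k} =
          {ω | ft (fun k => {ω' | ub - ε < M (gr m k) ω'}) (N * 2 ^ m) ω = k} := by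
        ext ω
        exact ⟨fun h => (gr_strictMono m).injective h, fun h => congrArg (gr m) h⟩
      rw [hrw]
      exact measurableSet_ft_eq
        (fun j => measurableSet_lt measurable_const (hadp (gr m j))) hk.1
    · exact (measurableSet_lt (hadp (gr m k)) measurable_const).union
        (measurableSet_lt measurable_const (hadp (gr m k)))
  · refine MeasurableSet.biUnion (hDc.mono fun d hd => hd.1) fun d hd => ?_
    refine ℱ.mono (le_of_lt hd.2) _ (MeasurableSet.inter ?_ ?_)
    · simpa only [WithTop.coe_le_coe] using
        isStoppingTime_σs (M := M) (ub := ub) (ε := ε) (N := N) (m := m) hadp d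
    · exact (measurableSet_lt (hadp d) measurable_const).union
        (measurableSet_lt measurable_const (hadp d))

lemma isStoppingTime_τn (hadp : Adapted ℱ M) (hcont : ∀ ω, Continuous fun t => M t ω) :
    IsStoppingTime ℱ (fun ω => (τn M ub ε δ' N m n ω : WithTop ℝ≥0)) :=
  isStoppingTime_grid fun k => measurableSet_τd_lt hadp hcont (gr n k)


lemma M_τd_le_upper (hcont : ∀ ω, Continuous fun t => M t ω) {ω : Ω}
    (hZ' : M (σs M ub ε N m ω) ω < ub + ε) :
    M (τd M ub ε δ' N m ω) ω ≤ ub + ε := by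
  by_contra hgt
  push_neg at hgt
  have hσ0τ : σs M ub ε N m ω ≤ τd M ub ε δ' N m ω := σs_le_τd
  have hne : σs M ub ε N m ω ≠ τd M ub ε δ' N m ω := fun h =>
    absurd hZ' (by rw [h]; exact not_lt.mpr (le_of_lt hgt))
  have hσ0lt : σs M ub ε N m ω < τd M ub ε δ' N m ω := lt_of_le_of_ne hσ0τ hne
  have hV : {v : ℝ≥0 | ub + ε < M v ω} ∈ 𝓝 (τd M ub ε δ' N m ω) :=
    (isOpen_lt continuous_const (hcont ω)).mem_nhds hgt
  obtain ⟨a, haτ, haIoc⟩ := exists_Ioc_subset_of_mem_nhds hV ⟨_, hσ0lt⟩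
  obtain ⟨v, hv1, hv2⟩ := exists_between (max_lt haτ hσ0lt)
  have hvS : v ∈ Sset M ub ε δ' N m ω :=
    ⟨le_of_lt (lt_of_le_of_lt (le_max_right a _) hv1),
      Or.inr (haIoc ⟨lt_of_le_of_lt (le_max_left a _) hv1, le_of_lt hv2⟩)⟩
  exact absurd (τd_le_of_mem hvS) (not_le.mpr hv2)

lemma M_τd_le_drop (hcont : ∀ ω, Continuous fun t => M t ω) {ω : Ω}
    (hε0 : 0 ≤ ε) (hub : ∀ r, M r ω ≤ ub)
    (hdrop : ∃ t, σs M ub ε N m ω ≤ t ∧ t ≤ (N : ℝ≥0) ∧ M t ω < ub - δ') :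
    M (τd M ub ε δ' N m ω) ω ≤ ub - δ' := by
  obtain ⟨t, hσt, htN, hMt⟩ := hdrop
  have htS : t ∈ Sset M ub ε δ' N m ω := ⟨hσt, Or.inl hMt⟩
  have hτt : τd M ub ε δ' N m ω ≤ t := τd_le_of_mem htS
  by_contra hgt
  push_neg at hgt
  rcases eq_or_lt_of_le (τd_le_N (ω := ω) (M := M) (ub := ub) (ε := ε) (δ' := δ') (N := N)
    (m := m)) with hτN | hτN
  · have htn : t = (N : ℝ≥0) := le_antisymm htN (hτN ▸ hτt)
    rw [hτN, ← htn] at hgt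
    linarith
  · have hV : {v : ℝ≥0 | ub - δ' < M v ω} ∈ 𝓝 (τd M ub ε δ' N m ω) :=
      (isOpen_lt continuous_const (hcont ω)).mem_nhds hgt
    obtain ⟨c, hτc, hIco⟩ := exists_Ico_subset_of_mem_nhds hV ⟨_, hτN⟩
    have hmin : min c (N : ℝ≥0) ≤ τd M ub ε δ' N m ω := by
      refine le_csInf ⟨_, Or.inr rfl⟩ ?_
      rintro x (hx | hx)
      · rcases lt_or_ge x c with hxc | hxc
        · exfalso
          have hxτ : τd M ub ε δ' N m ω ≤ x := τd_le_of_mem hx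
          have hxV : ub - δ' < M x ω := hIco ⟨hxτ, hxc⟩
          rcases hx.2 with h1 | h1
          · linarith
          · have := hub x
            linarith
        · exact le_trans (min_le_left _ _) hxc
      · rw [Set.mem_singleton_iff] at hx
        rw [hx]
        exact min_le_right _ _
    exact absurd hmin (not_le.mpr (lt_min hτc hτN))

lemma eventually_mem_C (hcont : ∀ ω, Continuous fun t => M t ω) {ω : Ω}
    (hub : ∀ r, M r ω ≤ ub) (hε : 0 < ε) (hεδ : ε < δ')
    {s t : ℝ≥0} (hst : s ≤ t) (htN : t ≤ (N : ℝ≥0)) (hMs : M s ω = ub)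
    (hMt : M t ω < ub - δ') :
    ∀ᶠ m in atTop, (ub - ε < M (σs M ub ε N m ω) ω ∧ M (σs M ub ε N m ω) ω < ub + ε) ∧
      M (τd M ub ε δ' N m ω) ω ≤ ub - δ' := by
  have hδ'pos : (0:ℝ) < δ' := lt_trans hε hεδ
  have hstlt : s < t := lt_of_le_of_ne hst (fun h => by rw [← h, hMs] at hMt; linarith)
  have hV : {v : ℝ≥0 | ub - ε < M v ω} ∈ 𝓝 s :=
    (isOpen_lt continuous_const (hcont ω)).mem_nhds (by simp only [Set.mem_setOf_eq, hMs]; linarith)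
  obtain ⟨c, hsc, hIco⟩ := exists_Ico_subset_of_mem_nhds hV ⟨s + 1, lt_add_one s⟩
  obtain ⟨m₀, hm₀⟩ : ∃ m₀ : ℕ, s + ((2:ℝ≥0) ^ m₀)⁻¹ < min c t := by
    have h1 : s < min c t := lt_min hsc hstlt
    have hd : 0 < min c t - s := tsub_pos_of_lt h1
    obtain ⟨m₀, hm₀⟩ := pow_unbounded_of_one_lt (min c t - s)⁻¹ (one_lt_two : (1:ℝ≥0) < 2)
    refine ⟨m₀, ?_⟩
    have hinv : ((2:ℝ≥0) ^ m₀)⁻¹ < min c t - s := by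
      rw [← inv_inv (min c t - s)]
      exact inv_strictAnti₀ (by positivity) hm₀
    calc s + ((2:ℝ≥0) ^ m₀)⁻¹ < s + (min c t - s) := by
          exact add_lt_add_right hinv s
      _ = min c t := add_tsub_cancel_of_le (le_of_lt h1)
  filter_upwards [eventually_ge_atTop m₀] with m hm
  have hinvle : ((2:ℝ≥0) ^ m)⁻¹ ≤ ((2:ℝ≥0) ^ m₀)⁻¹ :=
    inv_anti₀ (by positivity) (pow_le_pow_right₀ one_le_two hm)
  set k := ⌊s * 2 ^ m⌋₊ + 1 with hk
  have hsN : s < (N : ℝ≥0) := lt_of_lt_of_le hstlt htN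
  have hkK : k ≤ N * 2 ^ m := floor_succ_le_top hsN
  have hsg : s < gr m k := lt_gr_floor_succ m s
  have hgle : gr m k ≤ s + ((2:ℝ≥0) ^ m)⁻¹ := gr_floor_succ_le m s
  have hgmin : gr m k < min c t :=
    lt_of_le_of_lt (hgle.trans (add_le_add_right hinvle s)) hm₀
  have hmemk : ω ∈ {ω' | ub - ε < M (gr m k) ω'} :=
    hIco ⟨le_of_lt hsg, lt_of_lt_of_le hgmin (min_le_left _ _)⟩
  have hσmem : ub - ε < M (σs M ub ε N m ω) ω := by
    rcases ft_mem_or (𝒜 := fun j => {ω' | ub - ε < M (gr m j) ω'}) (K := N * 2 ^ m) ω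
      with h | h
    · exact h
    · exact absurd hmemk (h k hkK)
  have hσub : M (σs M ub ε N m ω) ω < ub + ε := lt_of_le_of_lt (hub _) (by linarith)
  refine ⟨⟨hσmem, hσub⟩, ?_⟩
  refine M_τd_le_drop hcont (le_of_lt hε) hub ⟨t, ?_, htN, hMt⟩
  exact le_of_lt (lt_of_le_of_lt (gr_mono (ft_le_of_mem hkK hmemk))
    (lt_of_lt_of_le hgmin (min_le_right _ _)))


lemma σs_mem_finset (ω : Ω) :
    σs M ub ε N m ω ∈ (Finset.range (N * 2 ^ m + 1)).image (gr m) :=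
  Finset.mem_image.mpr ⟨_, Finset.mem_range.mpr (Nat.lt_succ_of_le (ft_le _ _ _)), rfl⟩

lemma τn_mem_finset (ω : Ω) :
    τn M ub ε δ' N m n ω ∈ (Finset.range (N * 2 ^ n + 1)).image (gr n) :=
  Finset.mem_image.mpr ⟨_, Finset.mem_range.mpr (Nat.lt_succ_of_le (ft_le _ _ _)), rfl⟩

end Defs

section Key

variable {P : Measure Ω} [IsProbabilityMeasure P] {ℱ : Filtration ℝ≥0 m0}
variable {M : ℝ≥0 → Ω → ℝ} {ub ε δ' : ℝ} {N m : ℕ}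

lemma key (hmart : Martingale M ℱ P) (hcont : ∀ ω, Continuous fun t => M t ω)
    (hε : 0 < ε) (hεδ : ε < δ') :
    P ({ω | ub - ε < M (σs M ub ε N m ω) ω ∧ M (σs M ub ε N m ω) ω < ub + ε} ∩
       {ω | M (τd M ub ε δ' N m ω) ω ≤ ub - δ'}) ≤ ENNReal.ofReal (2 * ε / (δ' + ε)) := by
  have hadp := hmart.stronglyAdapted.adapted
  have hσ : IsStoppingTime ℱ (fun ω => (σs M ub ε N m ω : WithTop ℝ≥0)) := isStoppingTime_σs hadp
  have hτ : ∀ n, IsStoppingTime ℱ (fun ω => (τn M ub ε δ' N m n ω : WithTop ℝ≥0)) :=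
    fun n => isStoppingTime_τn hadp hcont
  have hσle : ∀ ω, σs M ub ε N m ω ≤ (N : ℝ≥0) := fun ω => σs_le
  have hσm0 : hσ.measurableSpace ≤ m0 := hσ.measurableSpace_le_of_le (fun ω => WithTop.coe_le_coe.mpr (hσle ω))
  set Z := stoppedValue M (fun ω => (σs M ub ε N m ω : WithTop ℝ≥0)) with hZdef
  set Y : Ω → ℝ := fun ω => M (τd M ub ε δ' N m ω) ω with hYdef
  set Yn : ℕ → Ω → ℝ := fun n => stoppedValue M (fun ω => (τn M ub ε δ' N m n ω : WithTop ℝ≥0)) with hYndef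
  have hZint : Integrable Z P :=
    integrable_stoppedValue_of_mem_finset hσ hmart.integrable
      (fun ω => ⟨_, σs_mem_finset ω, rfl⟩)
  have hYnint : ∀ n, Integrable (Yn n) P := fun n =>
    integrable_stoppedValue_of_mem_finset (hτ n) hmart.integrable
      (fun ω => ⟨_, τn_mem_finset ω, rfl⟩)
  -- optional sampling
  have hos : ∀ n, Z =ᵐ[P] P[Yn n | hσ.measurableSpace] := fun n =>
    hmart.stoppedValue_ae_eq_condExp_of_le_of_countable_range (hτ n) hσ
      (fun ω => WithTop.coe_le_coe.mpr (σs_le_τn ω)) (fun ω => WithTop.coe_le_coe.mpr (τn_le_N ω))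
      range_τn_countable range_σs_countable
  -- the conditioning event
  set A : Set Ω := {ω | ub - ε < Z ω ∧ Z ω < ub + ε} with hAdef
  have hAi : ∀ i : ℝ≥0, MeasurableSet[ℱ i] (A ∩ {ω | σs M ub ε N m ω ≤ i}) := by
    intro i
    have heq : A ∩ {ω | σs M ub ε N m ω ≤ i} =
        ⋃ (k : ℕ) (_ : k ≤ N * 2 ^ m ∧ gr m k ≤ i),
          ({ω | ft (fun j => {ω' | ub - ε < M (gr m j) ω'}) (N * 2 ^ m) ω = k} ∩
            {ω | ub - ε < M (gr m k) ω ∧ M (gr m k) ω < ub + ε}) := by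
      ext ω
      simp only [Set.mem_inter_iff, Set.mem_setOf_eq, Set.mem_iUnion, exists_prop]
      constructor
      · rintro ⟨⟨hz1, hz2⟩, hσi⟩
        exact ⟨ft (fun j => {ω' | ub - ε < M (gr m j) ω'}) (N * 2 ^ m) ω,
          ⟨ft_le _ _ _, hσi⟩, rfl, hz1, hz2⟩
      · rintro ⟨k, ⟨hk, hki⟩, hft, hb1, hb2⟩
        have hσeq : σs M ub ε N m ω = gr m k := congrArg (gr m) hft
        have hZeq : Z ω = M (gr m k) ω := by
          show M (σs M ub ε N m ω) ω = _
          rw [hσeq]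
        exact ⟨⟨by rw [hZeq]; exact hb1, by rw [hZeq]; exact hb2⟩, hσeq ▸ hki⟩
    rw [heq]
    refine MeasurableSet.iUnion fun k => MeasurableSet.iUnion fun hk =>
      ℱ.mono hk.2 _ (MeasurableSet.inter ?_ ?_)
    · exact measurableSet_ft_eq
        (fun j => measurableSet_lt measurable_const (hadp (gr m j))) hk.1
    · exact (measurableSet_lt measurable_const (hadp (gr m k))).inter
        (measurableSet_lt (hadp (gr m k)) measurable_const)
  have hAmeas' : MeasurableSet[hσ.measurableSpace] A := by
    refine ⟨?_, fun i => ?_⟩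
    · have := hAi N
      rw [(Set.inter_eq_left (s := A) (t := {ω | σs M ub ε N m ω ≤ (N : ℝ≥0)})).mpr
        (fun ω _ => σs_le)] at this
      exact (le_iSup (fun t => ℱ t) (N : ℝ≥0)) _ this
    · simpa only [WithTop.coe_le_coe] using hAi i
  have hAmeas : MeasurableSet A := hσm0 _ hAmeas'
  -- integral identity
  have hid : ∀ n, ∫ ω in A, Z ω ∂P = ∫ ω in A, Yn n ω ∂P := fun n => by
    calc ∫ ω in A, Z ω ∂P = ∫ ω in A, (P[Yn n | hσ.measurableSpace]) ω ∂P :=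
          integral_congr_ae (ae_restrict_of_ae (hos n))
      _ = ∫ ω in A, Yn n ω ∂P := setIntegral_condExp hσm0 (hYnint n) hAmeas'
  -- convergence
  have hconv : ∀ ω, Tendsto (fun n => Yn n ω) atTop (𝓝 (Y ω)) := by
    intro ω
    have hinv : Tendsto (fun n : ℕ => ((2 : ℝ≥0) ^ n)⁻¹) atTop (𝓝 0) := by
      simp_rw [← inv_pow]
      refine NNReal.tendsto_pow_atTop_nhds_zero_of_lt_one ?_
      rw [inv_lt_one_iff₀]
      norm_num
    have h1 : Tendsto (fun n => τn M ub ε δ' N m n ω) atTop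
        (𝓝 (τd M ub ε δ' N m ω)) := by
      refine tendsto_of_tendsto_of_tendsto_of_le_of_le tendsto_const_nhds ?_
        (fun n => (τn_bounds ω).1) (fun n => (τn_bounds ω).2)
      have h2 : Tendsto (fun n : ℕ => τd M ub ε δ' N m ω + ((2 : ℝ≥0) ^ n)⁻¹) atTop
          (𝓝 (τd M ub ε δ' N m ω + 0)) :=
        Tendsto.add
          (tendsto_const_nhds :
            Tendsto (fun _ : ℕ => τd M ub ε δ' N m ω) atTop (𝓝 (τd M ub ε δ' N m ω))) hinv
      rw [add_zero] at h2
      exact h2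
    exact ((hcont ω).tendsto _).comp h1
  have hYnsm : ∀ n, StronglyMeasurable (Yn n) := fun n => by
    show StronglyMeasurable (stoppedValue M (fun ω => (τn M ub ε δ' N m n ω : WithTop ℝ≥0)))
    rw [stoppedValue_eq_of_mem_finset (τ := fun ω => (τn M ub ε δ' N m n ω : WithTop ℝ≥0))
      (fun ω => ⟨_, τn_mem_finset ω, rfl⟩)]
    refine Finset.stronglyMeasurable_sum _ fun i _ => ?_
    refine StronglyMeasurable.indicator ((hmart.stronglyMeasurable i).mono (ℱ.le i)) ?_
    exact (ℱ.le i) _ ((hτ n).measurableSet_eq_of_countable_range range_τn_countable i)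
  have hYsm : StronglyMeasurable Y :=
    stronglyMeasurable_of_tendsto atTop hYnsm (tendsto_pi_nhds.mpr hconv)
  -- uniform integrability
  have hcond : ∀ n, Yn n =ᵐ[P] P[M N | (hτ n).measurableSpace] := fun n =>
    hmart.stoppedValue_ae_eq_condExp_of_le_const_of_countable_range (hτ n)
      (fun ω => WithTop.coe_le_coe.mpr (τn_le_N ω))
      range_τn_countable
  have hui : UniformIntegrable (fun n => P[M (N : ℝ≥0) | (hτ n).measurableSpace]) 1 P :=
    (hmart.integrable (N : ℝ≥0)).uniformIntegrable_condExp
      (fun n => (hτ n).measurableSpace_le_of_le (fun ω => WithTop.coe_le_coe.mpr (τn_le_N ω)))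
  have hunif : UnifIntegrable Yn 1 P := hui.2.1.ae_eq fun n => (hcond n).symm
  obtain ⟨C, hC⟩ := hui.2.2
  have hC' : ∀ n, eLpNorm (Yn n) 1 P ≤ C := fun n =>
    le_trans (le_of_eq (eLpNorm_congr_ae (hcond n))) (hC n)
  have hYmem : MemLp Y 1 P := by
    refine ⟨hYsm.aestronglyMeasurable, ?_⟩
    have hle : eLpNorm Y 1 P ≤ C := by
      rw [eLpNorm_one_eq_lintegral_enorm]
      have heq : ∀ ω, (‖Y ω‖₊ : ℝ≥0∞) = liminf (fun n => (‖Yn n ω‖₊ : ℝ≥0∞)) atTop :=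
        fun ω => (Tendsto.liminf_eq ((ENNReal.continuous_coe.tendsto _).comp
          ((continuous_nnnorm.tendsto _).comp (hconv ω)))).symm
      calc ∫⁻ ω, (‖Y ω‖₊ : ℝ≥0∞) ∂P
          = ∫⁻ ω, liminf (fun n => (‖Yn n ω‖₊ : ℝ≥0∞)) atTop ∂P := by
            congr 1
            exact funext heq
        _ ≤ liminf (fun n => ∫⁻ ω, (‖Yn n ω‖₊ : ℝ≥0∞) ∂P) atTop :=
            lintegral_liminf_le fun n => (hYnsm n).measurable.nnnorm.coe_nnreal_ennreal
        _ ≤ C := by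
            refine liminf_le_of_frequently_le' (Frequently.of_forall fun n => ?_)
            change ∫⁻ ω, ‖Yn n ω‖ₑ ∂P ≤ C
            rw [← eLpNorm_one_eq_lintegral_enorm]
            exact hC' n
    exact lt_of_le_of_lt hle ENNReal.coe_lt_top
  have hYint : Integrable Y P := memLp_one_iff_integrable.mp hYmem
  have hL1 : Tendsto (fun n => eLpNorm (Yn n - Y) 1 P) atTop (𝓝 0) :=
    tendsto_Lp_finite_of_tendsto_ae le_rfl ENNReal.one_ne_top
      (fun n => (hYnint n).1) hYmem hunif (Eventually.of_forall hconv)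
  have hsetconv : Tendsto (fun n => ∫ ω in A, Yn n ω ∂P) atTop (𝓝 (∫ ω in A, Y ω ∂P)) := by
    refine tendsto_integral_of_L1 Y hYint.integrableOn.1
      (Eventually.of_forall fun n => (hYnint n).integrableOn) ?_
    have hbound : ∀ n, ∫⁻ ω in A, ‖Yn n ω - Y ω‖₊ ∂P ≤ eLpNorm (Yn n - Y) 1 P := fun n => by
      rw [eLpNorm_one_eq_lintegral_enorm]
      refine le_trans (setLIntegral_le_lintegral _ _) (le_of_eq ?_)
      congr
    exact tendsto_of_tendsto_of_tendsto_of_le_of_le tendsto_const_nhds hL1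
      (fun n => zero_le) hbound
  have hZY : ∫ ω in A, Z ω ∂P = ∫ ω in A, Y ω ∂P := by
    have hconst : (fun n => ∫ ω in A, Yn n ω ∂P) = fun _ => ∫ ω in A, Z ω ∂P :=
      funext fun n => (hid n).symm
    rw [hconst] at hsetconv
    exact tendsto_nhds_unique hsetconv tendsto_const_nhds |>.symm
  -- the drop event
  set D : Set Ω := {ω | Y ω ≤ ub - δ'} with hDdef
  have hDmeas : MeasurableSet D := measurableSet_le hYsm.measurable measurable_const
  -- bounds
  have h1 : (ub - ε) * (P A).toReal ≤ ∫ ω in A, Z ω ∂P := by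
    have := setIntegral_mono_on (integrableOn_const (measure_ne_top P A))
      hZint.integrableOn hAmeas (fun ω hω => le_of_lt hω.1)
    rwa [setIntegral_const, smul_eq_mul, mul_comm] at this
  have hsplit : ∫ ω in A, Y ω ∂P = ∫ ω in A ∩ D, Y ω ∂P + ∫ ω in A \ D, Y ω ∂P := by
    rw [← setIntegral_union (disjoint_sdiff_self_right.mono_left Set.inter_subset_right)
      (hAmeas.diff hDmeas) hYint.integrableOn hYint.integrableOn,
      Set.inter_union_diff]
  have h2 : ∫ ω in A ∩ D, Y ω ∂P ≤ (ub - δ') * (P (A ∩ D)).toReal := by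
    have := setIntegral_mono_on hYint.integrableOn
      (integrableOn_const (measure_ne_top P (A ∩ D)))
      (hAmeas.inter hDmeas) (fun ω hω => hω.2)
    rwa [setIntegral_const, smul_eq_mul, mul_comm] at this
  have h3 : ∫ ω in A \ D, Y ω ∂P ≤ (ub + ε) * (P (A \ D)).toReal := by
    have hb : ∀ ω ∈ A \ D, Y ω ≤ ub + ε := fun ω hω => M_τd_le_upper hcont hω.1.2
    have := setIntegral_mono_on hYint.integrableOn
      (integrableOn_const (measure_ne_top P (A \ D)))
      (hAmeas.diff hDmeas) hb
    rwa [setIntegral_const, smul_eq_mul, mul_comm] at this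
  -- arithmetic
  have hxy : (P (A ∩ D)).toReal + (P (A \ D)).toReal = (P A).toReal := by
    rw [← ENNReal.toReal_add (measure_lt_top P _).ne (measure_lt_top P _).ne,
      measure_inter_add_diff A hDmeas]
  have ha1 : (P A).toReal ≤ 1 := by
    have := prob_le_one (μ := P) (s := A)
    calc (P A).toReal ≤ (1 : ℝ≥0∞).toReal :=
          ENNReal.toReal_mono (by norm_num) this
      _ = 1 := by simp
  have hx0 : 0 ≤ (P (A ∩ D)).toReal := ENNReal.toReal_nonneg
  have hchain : (ub - ε) * (P A).toReal ≤
      (ub - δ') * (P (A ∩ D)).toReal + (ub + ε) * (P (A \ D)).toReal := by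
    calc (ub - ε) * (P A).toReal ≤ ∫ ω in A, Z ω ∂P := h1
      _ = ∫ ω in A, Y ω ∂P := hZY
      _ = ∫ ω in A ∩ D, Y ω ∂P + ∫ ω in A \ D, Y ω ∂P := hsplit
      _ ≤ _ := add_le_add h2 h3
  have hgoal : (P (A ∩ D)).toReal ≤ 2 * ε / (δ' + ε) := by
    have hδε : (0:ℝ) < δ' + ε := by linarith
    have haε : ε * (P A).toReal ≤ ε := by
      have h := mul_le_mul_of_nonneg_left ha1 hε.le
      linarith [h]
    have hyeq : (P (A \ D)).toReal = (P A).toReal - (P (A ∩ D)).toReal := by linarith [hxy]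
    rw [hyeq] at hchain
    rw [le_div_iff₀ hδε]
    nlinarith [hchain, haε]
  show P (A ∩ D) ≤ ENNReal.ofReal (2 * ε / (δ' + ε))
  calc P (A ∩ D) = ENNReal.ofReal ((P (A ∩ D)).toReal) :=
        (ENNReal.ofReal_toReal (measure_lt_top P _).ne).symm
    _ ≤ ENNReal.ofReal (2 * ε / (δ' + ε)) := ENNReal.ofReal_le_ofReal hgoal


lemma bad_null (hmart : Martingale M ℱ P) (hcont : ∀ ω, Continuous fun t => M t ω)
    {δ' : ℝ} (hδ' : 0 < δ') (N : ℕ) :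
    P {ω | (∀ r, M r ω ≤ ub) ∧ ∃ s t : ℝ≥0, s ≤ t ∧ t ≤ (N : ℝ≥0) ∧ M s ω = ub ∧
      M t ω < ub - δ'} = 0 := by
  set Bad := {ω | (∀ r, M r ω ≤ ub) ∧ ∃ s t : ℝ≥0, s ≤ t ∧ t ≤ (N : ℝ≥0) ∧ M s ω = ub ∧
      M t ω < ub - δ'} with hBad
  have hbound : ∀ j : ℕ, P Bad ≤ ENNReal.ofReal (2 / (j + 2)) := by
    intro j
    set ε := δ' / (j + 2) with hεdef
    have hε : 0 < ε := by positivity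
    have hεδ : ε < δ' := by
      rw [hεdef, div_lt_iff₀ (by positivity)]
      nlinarith
    set Cm : ℕ → Set Ω := fun m =>
      {ω | ub - ε < M (σs M ub ε N m ω) ω ∧ M (σs M ub ε N m ω) ω < ub + ε} ∩
        {ω | M (τd M ub ε δ' N m ω) ω ≤ ub - δ'} with hCm
    have hsub : Bad ⊆ ⋃ m₀ : ℕ, ⋂ m ∈ Set.Ici m₀, Cm m := by
      rintro ω ⟨hub, s, t, hst, htN, hMs, hMt⟩
      obtain ⟨m₀, hm₀⟩ := eventually_atTop.mp
        (eventually_mem_C hcont hub hε hεδ hst htN hMs hMt)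
      exact Set.mem_iUnion.mpr ⟨m₀, Set.mem_iInter₂.mpr fun m hm => hm₀ m hm⟩
    calc P Bad ≤ P (⋃ m₀ : ℕ, ⋂ m ∈ Set.Ici m₀, Cm m) := measure_mono hsub
      _ ≤ ⨆ m₀ : ℕ, P (⋂ m ∈ Set.Ici m₀, Cm m) := by
          refine le_of_eq (Directed.measure_iUnion ?_)
          refine Monotone.directed_le fun a b hab => ?_
          exact Set.biInter_subset_biInter_left fun m hm => le_trans hab hm
      _ ≤ ENNReal.ofReal (2 / (j + 2)) := by
          refine iSup_le fun m₀ => ?_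
          have hCbound : P (Cm m₀) ≤ ENNReal.ofReal (2 * ε / (δ' + ε)) :=
            key hmart hcont hε hεδ
          refine le_trans (measure_mono (Set.biInter_subset_of_mem (Set.mem_Ici.mpr le_rfl)))
            (le_trans hCbound (ENNReal.ofReal_le_ofReal ?_))
          rw [hεdef]
          have hj2 : (0:ℝ) < (j:ℝ) + 2 := by positivity
          have hq : (0:ℝ) < δ' / (↑j + 2) := div_pos hδ' hj2
          rw [div_le_div_iff₀ (add_pos hδ' hq) hj2]
          have hkey : 2 * (δ' / (↑j + 2)) * (↑j + 2) = 2 * δ' := by field_simp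
          rw [hkey]
          linarith
  have hbound' : ∀ j : ℕ, P Bad ≤ ENNReal.ofReal (2 * (1 / (j + 1))) := fun j => by
    refine le_trans (hbound j) (ENNReal.ofReal_le_ofReal ?_)
    have hj1 : (0:ℝ) < (j:ℝ) + 1 := by positivity
    have hj2 : (0:ℝ) < (j:ℝ) + 2 := by positivity
    rw [mul_one_div, div_le_div_iff₀ hj2 hj1]
    linarith
  have htend : Tendsto (fun j : ℕ => ENNReal.ofReal (2 * (1 / (j + 1)))) atTop (𝓝 0) := by
    rw [show (0 : ℝ≥0∞) = ENNReal.ofReal (2 * 0) by simp]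
    exact ENNReal.tendsto_ofReal (tendsto_one_div_add_atTop_nhds_zero_nat.const_mul 2)
  exact le_zero_iff.mp (ge_of_tendsto' htend hbound')

end Key

end Stmt16Aux

open Stmt16Aux in
theorem stmt16 {Ω : Type*} {m0 : MeasurableSpace Ω} (P : Measure Ω)
    [IsProbabilityMeasure P] (ℱ : Filtration ℝ≥0 m0)
    (M : ℝ≥0 → Ω → ℝ) (Minf : Ω → ℝ) (μ : Measure ℝ)
    (hmart : Martingale M ℱ P)
    (hcont : ∀ ω, Continuous fun t => M t ω)
    (hUI : UniformIntegrable M 1 P)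
    (hMinf : Measurable Minf)
    (hlim : ∀ᵐ ω ∂P, Tendsto (fun t => M t ω) atTop (𝓝 (Minf ω)))
    (hlaw : P.map Minf = μ)
    (ub : ℝ) (hpos : 0 < P {ω | (⨆ t, M t ω) = ub}) :
    (∀ᵐ ω ∂P, (⨆ t, M t ω) = ub →
      ∀ s t : ℝ≥0, s ≤ t → M s ω = ub → M t ω = ub) ∧
    (∀ᵐ ω ∂P, (⨆ t, M t ω) = ub → Minf ω = ub) ∧
    P {ω | (⨆ t, M t ω) = ub} ≤ μ {ub} := by
  -- a.e. boundedness of paths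
  have hbdd : ∀ᵐ ω ∂P, BddAbove (Set.range fun t => M t ω) := by
    filter_upwards [hlim] with ω hω
    obtain ⟨T, hT⟩ := eventually_atTop.mp (hω.eventually_lt_const (lt_add_one (Minf ω)))
    have h1 : BddAbove ((fun t => M t ω) '' Set.Icc 0 T) :=
      (isCompact_Icc.image (hcont ω)).bddAbove
    have h2 : BddAbove ((fun t => M t ω) '' Set.Ici T) := by
      refine ⟨Minf ω + 1, ?_⟩
      rintro y ⟨t, ht, rfl⟩
      exact le_of_lt (hT t ht)
    have hu : Set.range (fun t => M t ω) =
        (fun t => M t ω) '' Set.Icc 0 T ∪ (fun t => M t ω) '' Set.Ici T := by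
      apply Set.eq_of_subset_of_subset
      · rintro y ⟨x, rfl⟩
        rcases le_total x T with h | h
        · exact Or.inl ⟨x, ⟨zero_le, h⟩, rfl⟩
        · exact Or.inr ⟨x, h, rfl⟩
      · rintro y (⟨x, _, rfl⟩ | ⟨x, _, rfl⟩) <;> exact ⟨x, rfl⟩
    rw [hu]
    exact h1.union h2
  -- the null bad events
  have hnb : ∀ᵐ ω ∂P, ∀ j k : ℕ,
      ω ∉ {ω' | (∀ r, M r ω' ≤ ub) ∧ ∃ s t : ℝ≥0, s ≤ t ∧ t ≤ (k : ℝ≥0) ∧ M s ω' = ub ∧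
        M t ω' < ub - (1 / ((j : ℝ) + 1))} := by
    rw [ae_all_iff]
    intro j
    rw [ae_all_iff]
    intro k
    exact measure_eq_zero_iff_ae_notMem.mp (bad_null hmart hcont (by positivity) k)
  have h1 : ∀ᵐ ω ∂P, (⨆ t, M t ω) = ub →
      ∀ s t : ℝ≥0, s ≤ t → M s ω = ub → M t ω = ub := by
    filter_upwards [hbdd, hnb] with ω hb hn
    intro hsup s t hst hMs
    have hub : ∀ r, M r ω ≤ ub := fun r => hsup ▸ le_ciSup hb r
    by_contra hne
    have hlt : M t ω < ub := lt_of_le_of_ne (hub t) hne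
    obtain ⟨j, hj⟩ := exists_nat_one_div_lt (show (0:ℝ) < ub - M t ω by linarith)
    obtain ⟨k, hk⟩ := exists_nat_ge t
    exact hn j k ⟨hub, s, t, hst, hk, hMs, by linarith⟩
  have h2 : ∀ᵐ ω ∂P, (⨆ t, M t ω) = ub → Minf ω = ub := by
    filter_upwards [hbdd, hlim, h1] with ω hb hl hgood hsup
    have hub : ∀ r, M r ω ≤ ub := fun r => hsup ▸ le_ciSup hb r
    have hMinf_le : Minf ω ≤ ub := le_of_tendsto hl (Eventually.of_forall hub)
    by_contra hne
    have hlt : Minf ω < ub := lt_of_le_of_ne hMinf_le hne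
    obtain ⟨c, hc1, hc2⟩ := exists_between hlt
    obtain ⟨T, hT⟩ := eventually_atTop.mp (hl.eventually_lt_const hc1)
    obtain ⟨z, hz, hzmax⟩ := isCompact_Icc.exists_isMaxOn (Set.nonempty_Icc.mpr (zero_le : (0:ℝ≥0) ≤ T))
      ((hcont ω).continuousOn (s := Set.Icc 0 T))
    have hmax : ∀ r, M r ω ≤ max (M z ω) c := by
      intro r
      rcases le_total r T with h | h
      · exact le_trans (hzmax ⟨zero_le, h⟩) (le_max_left _ _)
      · exact le_trans (le_of_lt (hT r h)) (le_max_right _ _)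
    have hub_le : ub ≤ max (M z ω) c := hsup ▸ ciSup_le hmax
    have hMz : M z ω = ub := by
      rcases max_cases (M z ω) c with ⟨hm, _⟩ | ⟨hm, _⟩
      · exact le_antisymm (hub z) (hm ▸ hub_le)
      · rw [hm] at hub_le
        linarith
    have := hgood hsup z (max z T) (le_max_left _ _) hMz
    have hlt2 := hT (max z T) (le_max_right _ _)
    rw [this] at hlt2
    linarith
  refine ⟨h1, h2, ?_⟩
  have hsub : {ω | (⨆ t, M t ω) = ub} ≤ᵐ[P] {ω | Minf ω = ub} := by
    filter_upwards [h2] with ω h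
    intro hω
    exact h hω
  calc P {ω | (⨆ t, M t ω) = ub} ≤ P {ω | Minf ω = ub} := measure_mono_ae hsub
    _ = μ {ub} := by
      rw [← hlaw, Measure.map_apply hMinf (measurableSet_singleton ub)]
      rfl
end

section
/- Let (M_t) be a continuous uniformly integrable martingale with M_0 = 0 and M_∞ ~ μ, and define p(b,b̄) = P(inf_t M_t > b and sup_t M_t < b̄) for b ≤ 0 ≤ b̄. Then p is continuous at (b,b̄) whenever μ({b}) = μ({b̄}) = 0; moreover p(·,b̄) is right-continuous in b (càdlàg) and p(b,·) is left-continuous in b̄ (càglàd). -/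
open MeasureTheory Set Filter Topology
open scoped NNReal ENNReal Classical

noncomputable section StMAux

/-- nonneg rational cast to `ℝ≥0`. -/
def qt (q : ℚ) : ℝ≥0 := Real.toNNReal (q : ℝ)

variable {Ω : Type*}

lemma qt_le_of_le {q : ℚ} {t : ℝ≥0} (h : (q : ℝ) ≤ (t : ℝ)) : qt q ≤ t := by
  have := Real.toNNReal_mono h
  rwa [Real.toNNReal_coe] at this

/-- rationals are dense in `ℝ≥0`: sequence of `qt q` tending to `t`. -/
lemma exists_qt_tendsto (t : ℝ≥0) :
    ∃ u : ℕ → ℚ, Tendsto (fun j => qt (u j)) atTop (𝓝 t) := by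
  have h1 : ∀ j : ℕ, ∃ q : ℚ, (t : ℝ) - 1/(j+1) < (q:ℝ) ∧ (q:ℝ) < (t:ℝ) + 1/(j+1) := by
    intro j
    refine exists_rat_btwn ?_
    have : (0:ℝ) < 1/(j+1) := by positivity
    linarith
  choose u hu1 hu2 using h1
  refine ⟨u, ?_⟩
  have htendr : Tendsto (fun j : ℕ => (u j : ℝ)) atTop (𝓝 (t:ℝ)) := by
    have hz : Tendsto (fun j : ℕ => 1/((j:ℝ)+1)) atTop (𝓝 0) :=
      tendsto_one_div_add_atTop_nhds_zero_nat
    have hlo : Tendsto (fun j : ℕ => (t:ℝ) - 1/((j:ℝ)+1)) atTop (𝓝 ((t:ℝ) - 0)) :=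
      tendsto_const_nhds.sub hz
    have hhi : Tendsto (fun j : ℕ => (t:ℝ) + 1/((j:ℝ)+1)) atTop (𝓝 ((t:ℝ) + 0)) :=
      tendsto_const_nhds.add hz
    rw [sub_zero] at hlo; rw [add_zero] at hhi
    exact tendsto_of_tendsto_of_tendsto_of_le_of_le hlo hhi
      (fun j => (hu1 j).le) (fun j => (hu2 j).le)
  have : Tendsto (fun j => Real.toNNReal (u j : ℝ)) atTop (𝓝 (Real.toNNReal (t:ℝ))) :=
    (continuous_real_toNNReal.tendsto _).comp htendr
  rwa [Real.toNNReal_coe] at this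

lemma cont_le_of_rat {f : ℝ≥0 → ℝ} (hf : Continuous f) {r : ℝ}
    (h : ∀ q : ℚ, f (qt q) ≤ r) (t : ℝ≥0) : f t ≤ r := by
  obtain ⟨u, hu⟩ := exists_qt_tendsto t
  exact le_of_tendsto ((hf.tendsto t).comp hu) (Eventually.of_forall fun j => h (u j))

lemma cont_ge_of_rat {f : ℝ≥0 → ℝ} (hf : Continuous f) {r : ℝ}
    (h : ∀ q : ℚ, r ≤ f (qt q)) (t : ℝ≥0) : r ≤ f t := by
  have := cont_le_of_rat (f := fun s => -f s) hf.neg (r := -r) (fun q => by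
    simpa using neg_le_neg (h q)) t
  simpa using this

lemma bdd_of_tendsto {f : ℝ≥0 → ℝ} (hf : Continuous f) {L : ℝ}
    (hl : Tendsto f atTop (𝓝 L)) :
    BddAbove (Set.range f) ∧ BddBelow (Set.range f) := by
  obtain ⟨T, hT⟩ := (Metric.tendsto_atTop.mp hl) 1 one_pos
  have hK : IsCompact (f '' (Set.Icc 0 T)) := (isCompact_Icc).image hf
  obtain ⟨a, ha⟩ := hK.bddAbove
  obtain ⟨b, hb⟩ := hK.bddBelow
  constructor
  · refine ⟨max a (L+1), ?_⟩
    rintro x ⟨t, rfl⟩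
    rcases le_total t T with htT | htT
    · exact le_max_of_le_left (ha ⟨t, ⟨zero_le, htT⟩, rfl⟩)
    · have := hT t htT
      rw [Real.dist_eq, abs_lt] at this
      exact le_max_of_le_right (by linarith [this.2])
  · refine ⟨min b (L-1), ?_⟩
    rintro x ⟨t, rfl⟩
    rcases le_total t T with htT | htT
    · exact min_le_of_left_le (hb ⟨t, ⟨zero_le, htT⟩, rfl⟩)
    · have := hT t htT
      rw [Real.dist_eq, abs_lt] at this
      exact min_le_of_right_le (by linarith [this.1])


/-- event: `M` reaches level `a` by time `s`. -/
def HitBy (M : ℝ≥0 → Ω → ℝ) (a : ℝ) (s : ℝ≥0) : Set Ω :=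
  {ω | ∀ k : ℕ, ∃ q : ℚ, qt q ≤ s ∧ a - 1/(k+1) < M (qt q) ω}

lemma hitBy_mono_time {M : ℝ≥0 → Ω → ℝ} {a : ℝ} {s s' : ℝ≥0} (h : s ≤ s') :
    HitBy M a s ⊆ HitBy M a s' := by
  intro ω hω k
  obtain ⟨q, hq1, hq2⟩ := hω k
  exact ⟨q, hq1.trans h, hq2⟩

lemma hitBy_mono_level {M : ℝ≥0 → Ω → ℝ} {a a' : ℝ} (h : a' ≤ a) {s : ℝ≥0} :
    HitBy M a s ⊆ HitBy M a' s := by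
  intro ω hω k
  obtain ⟨q, hq1, hq2⟩ := hω k
  exact ⟨q, hq1, by linarith⟩

/-- pathwise characterization of `HitBy`. -/
lemma mem_hitBy_iff {M : ℝ≥0 → Ω → ℝ} {ω : Ω} (hc : Continuous fun t => M t ω)
    (h0 : M 0 ω = 0) {a : ℝ} (ha : 0 ≤ a) (s : ℝ≥0) :
    ω ∈ HitBy M a s ↔ ∃ t : ℝ≥0, t ≤ s ∧ a ≤ M t ω := by
  constructor
  · intro hω
    obtain ⟨tm, htm, hmax⟩ := (isCompact_Icc (a := (0:ℝ≥0)) (b := s)).exists_isMaxOn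
      ⟨0, ⟨le_rfl, zero_le⟩⟩ hc.continuousOn
    refine ⟨tm, htm.2, ?_⟩
    have hmax : ∀ u ∈ Set.Icc (0:ℝ≥0) s, M u ω ≤ M tm ω := fun u hu => hmax hu
    have key : ∀ k : ℕ, a - 1/((k:ℝ)+1) ≤ M tm ω := by
      intro k
      obtain ⟨q, hq1, hq2⟩ := hω k
      exact hq2.le.trans (hmax (qt q) ⟨zero_le, hq1⟩)
    have hten : Tendsto (fun k : ℕ => a - 1/((k:ℝ)+1)) atTop (𝓝 (a - 0)) :=
      tendsto_const_nhds.sub tendsto_one_div_add_atTop_nhds_zero_nat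
    rw [sub_zero] at hten
    exact le_of_tendsto hten (Eventually.of_forall key)
  · rintro ⟨t, hts, hat⟩ k
    have hpos : (0:ℝ) < 1/((k:ℝ)+1) := by positivity
    rcases eq_or_lt_of_le (zero_le : (0:ℝ≥0) ≤ t) with h0t | h0t
    · refine ⟨0, ?_, ?_⟩
      · simpa [qt] using (zero_le : (0:ℝ≥0) ≤ s)
      · have : a = 0 := le_antisymm (by rw [← h0t] at hat; simpa [h0] using hat) ha
        simp [qt, h0, this]
        linarith
    · -- t > 0
      have hopen : IsOpen ((fun u => M u ω) ⁻¹' Set.Ioi (a - 1/((k:ℝ)+1))) :=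
        isOpen_Ioi.preimage hc
      have htmem : t ∈ (fun u => M u ω) ⁻¹' Set.Ioi (a - 1/((k:ℝ)+1)) := by
        simp only [Set.mem_preimage, Set.mem_Ioi]; linarith
      obtain ⟨ε, hε, hball⟩ := Metric.isOpen_iff.mp hopen t htmem
      have hlt : (t:ℝ) - min ε (t:ℝ) < (t:ℝ) := by
        have : (0:ℝ) < min ε (t:ℝ) := lt_min hε (by exact_mod_cast h0t)
        linarith
      obtain ⟨q, hq1, hq2⟩ := exists_rat_btwn hlt
      have hq0 : (0:ℝ) ≤ (q:ℝ) := by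
        have : (t:ℝ) - min ε (t:ℝ) ≥ 0 := by
          have := min_le_right ε (t:ℝ); linarith
        linarith
      have hqt_le : qt q ≤ t := qt_le_of_le hq2.le
      have hdist : dist (qt q) t < ε := by
        rw [NNReal.dist_eq]
        have hqc : ((qt q : ℝ≥0) : ℝ) = (q:ℝ) := Real.coe_toNNReal _ hq0
        rw [hqc, abs_sub_lt_iff]
        have := min_le_left ε (t:ℝ)
        constructor <;> [linarith; linarith]
      have := hball hdist
      simp only [Set.mem_preimage, Set.mem_Ioi] at this
      exact ⟨q, hqt_le.trans hts, this⟩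

lemma hitBy_measurableSet {m0 : MeasurableSpace Ω} (ℱ : Filtration ℝ≥0 m0)
    {M : ℝ≥0 → Ω → ℝ} (hadp : ∀ t, StronglyMeasurable[ℱ t] (M t)) (a : ℝ) (s : ℝ≥0) :
    MeasurableSet[ℱ s] (HitBy M a s) := by
  have : HitBy M a s =
      ⋂ k : ℕ, ⋃ q : ℚ, ⋃ _ : qt q ≤ s, {ω | a - 1/((k:ℝ)+1) < M (qt q) ω} := by
    ext ω; simp [HitBy]
  rw [this]
  refine MeasurableSet.iInter fun k => MeasurableSet.iUnion fun q =>
    MeasurableSet.iUnion fun hq => ?_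
  have hm : Measurable[ℱ s] (M (qt q)) :=
    ((hadp (qt q)).mono (ℱ.mono hq)).measurable
  exact measurableSet_lt measurable_const hm


lemma nat_cast_div_pow (n k : ℕ) : ((n * 2^k : ℕ) : ℝ≥0) / 2^k = (n : ℝ≥0) := by
  push_cast
  field_simp

/-- dyadic discretisation of the hitting time of level `a`, capped at `n`. -/
def tauk (M : ℝ≥0 → Ω → ℝ) (a : ℝ) (n k : ℕ) (ω : Ω) : ℝ≥0 :=
  if h : ∃ j : ℕ, j ≤ n * 2^k ∧ ω ∈ HitBy M a ((j : ℝ≥0) / 2^k) then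
    (Nat.find h : ℝ≥0) / 2^k
  else (n : ℝ≥0)

lemma tauk_exists_iff {M : ℝ≥0 → Ω → ℝ} {a : ℝ} {n k : ℕ} {ω : Ω} :
    (∃ j : ℕ, j ≤ n * 2^k ∧ ω ∈ HitBy M a ((j : ℝ≥0) / 2^k)) ↔ ω ∈ HitBy M a (n : ℝ≥0) := by
  constructor
  · rintro ⟨j, hj, hmem⟩
    refine hitBy_mono_time ?_ hmem
    rw [← nat_cast_div_pow n k]
    have : (j : ℝ≥0) ≤ ((n * 2^k : ℕ) : ℝ≥0) := by exact_mod_cast hj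
    exact div_le_div_of_nonneg_right this (by positivity) |>.trans le_rfl
  · intro h
    exact ⟨n * 2^k, le_rfl, by rw [nat_cast_div_pow]; exact h⟩

lemma tauk_le {M : ℝ≥0 → Ω → ℝ} {a : ℝ} (n k : ℕ) (ω : Ω) :
    tauk M a n k ω ≤ (n : ℝ≥0) := by
  unfold tauk
  split_ifs with h
  · have hspec := Nat.find_spec h
    have : ((Nat.find h : ℕ) : ℝ≥0) ≤ ((n * 2^k : ℕ) : ℝ≥0) := by exact_mod_cast hspec.1
    calc (Nat.find h : ℝ≥0) / 2^k ≤ ((n * 2^k : ℕ) : ℝ≥0) / 2^k :=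
          div_le_div_of_nonneg_right this (by positivity) |>.trans le_rfl
      _ = (n : ℝ≥0) := nat_cast_div_pow n k
  · exact le_rfl

lemma tauk_isStoppingTime {m0 : MeasurableSpace Ω} (ℱ : Filtration ℝ≥0 m0)
    {M : ℝ≥0 → Ω → ℝ} (hadp : ∀ t, StronglyMeasurable[ℱ t] (M t)) (a : ℝ) (n k : ℕ) :
    IsStoppingTime ℱ (fun ω => (tauk M a n k ω : WithTop ℝ≥0)) := by
  intro t
  simp only [WithTop.coe_le_coe]
  have hset : {ω | tauk M a n k ω ≤ t} =
      (⋃ j : ℕ, ⋃ _ : j ≤ n * 2^k ∧ (j : ℝ≥0) / 2^k ≤ t, HitBy M a ((j : ℝ≥0) / 2^k)) ∪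
        (⋃ _ : (n : ℝ≥0) ≤ t, (HitBy M a (n : ℝ≥0))ᶜ) := by
    ext ω
    simp only [Set.mem_setOf_eq, Set.mem_union, Set.mem_iUnion, Set.mem_compl_iff]
    constructor
    · intro hle
      by_cases h : ∃ j : ℕ, j ≤ n * 2^k ∧ ω ∈ HitBy M a ((j : ℝ≥0) / 2^k)
      · left
        refine ⟨Nat.find h, ⟨(Nat.find_spec h).1, ?_⟩, (Nat.find_spec h).2⟩
        rw [tauk, dif_pos h] at hle
        exact hle
      · right
        rw [tauk, dif_neg h] at hle
        exact ⟨hle, fun hmem => h (tauk_exists_iff.mpr hmem)⟩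
    · rintro (⟨j, ⟨hj1, hj2⟩, hmem⟩ | ⟨hnt, hnot⟩)
      · have h : ∃ j : ℕ, j ≤ n * 2^k ∧ ω ∈ HitBy M a ((j : ℝ≥0) / 2^k) := ⟨j, hj1, hmem⟩
        rw [tauk, dif_pos h]
        have hfind : Nat.find h ≤ j := Nat.find_le ⟨hj1, hmem⟩
        calc (Nat.find h : ℝ≥0) / 2^k ≤ (j : ℝ≥0) / 2^k :=
              div_le_div_of_nonneg_right (by exact_mod_cast hfind) (by positivity)
          _ ≤ t := hj2
      · have h : ¬ ∃ j : ℕ, j ≤ n * 2^k ∧ ω ∈ HitBy M a ((j : ℝ≥0) / 2^k) :=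
          fun hex => hnot (tauk_exists_iff.mp hex)
        rw [tauk, dif_neg h]
        exact hnt
  rw [hset]
  refine MeasurableSet.union ?_ ?_
  · refine MeasurableSet.iUnion fun j => MeasurableSet.iUnion fun hj => ?_
    exact ℱ.mono hj.2 _ (hitBy_measurableSet ℱ hadp a _)
  · refine MeasurableSet.iUnion fun hn => ?_
    exact (ℱ.mono hn _ (hitBy_measurableSet ℱ hadp a _)).compl

lemma tauk_range_countable {M : ℝ≥0 → Ω → ℝ} {a : ℝ} (n k : ℕ) :
    (Set.range (tauk M a n k)).Countable := by
  have : Set.range (tauk M a n k) ⊆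
      (Set.range fun j : ℕ => (j : ℝ≥0) / 2^k) ∪ {(n : ℝ≥0)} := by
    rintro x ⟨ω, rfl⟩
    unfold tauk
    split_ifs with h
    · exact Or.inl ⟨Nat.find h, rfl⟩
    · exact Or.inr rfl
  exact Set.Countable.mono this ((Set.countable_range _).union (Set.countable_singleton _))

lemma tauk_tendsto {M : ℝ≥0 → Ω → ℝ} {ω : Ω} (hc : Continuous fun t => M t ω)
    (h0 : M 0 ω = 0) {a : ℝ} (ha : 0 ≤ a) (n : ℕ) :
    Tendsto (fun k => M (tauk M a n k ω) ω) atTop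
      (𝓝 (if ω ∈ HitBy M a (n : ℝ≥0) then a else M (n : ℝ≥0) ω)) := by
  by_cases hmem : ω ∈ HitBy M a (n : ℝ≥0)
  · rw [if_pos hmem]
    set S : Set ℝ≥0 := {t : ℝ≥0 | t ≤ (n:ℝ≥0) ∧ a ≤ M t ω} with hS
    have hSne : S.Nonempty := by
      obtain ⟨t, ht1, ht2⟩ := (mem_hitBy_iff hc h0 ha (n:ℝ≥0)).mp hmem
      exact ⟨t, ht1, ht2⟩
    have hSclosed : IsClosed S := by
      have : S = Set.Iic (n:ℝ≥0) ∩ (fun t => M t ω) ⁻¹' Set.Ici a := rfl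
      rw [this]
      exact isClosed_Iic.inter (isClosed_Ici.preimage hc)
    set U := sInf S with hU
    have hUS : U ∈ S := hSclosed.csInf_mem hSne (OrderBot.bddBelow S)
    have hUn : U ≤ (n : ℝ≥0) := hUS.1
    have haU : a ≤ M U ω := hUS.2
    have hMU : M U ω = a := by
      rcases eq_or_lt_of_le (zero_le : (0:ℝ≥0) ≤ U) with hU0 | hU0
      · have h1 : a ≤ 0 := by rw [← hU0] at haU; rwa [h0] at haU
        have h2 : a = 0 := le_antisymm h1 ha
        rw [← hU0, h0, h2]
      · refine le_antisymm ?_ haU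
        have hlt : ∀ t : ℝ≥0, t < U → M t ω < a := by
          intro t ht
          by_contra hcon
          push_neg at hcon
          have : t ∈ S := ⟨(ht.le).trans hUn, hcon⟩
          exact absurd (csInf_le (OrderBot.bddBelow S) this) (not_le.mpr ht)
        haveI : (𝓝[<] U).NeBot := nhdsWithin_Iio_self_neBot' ⟨0, hU0⟩
        refine le_of_tendsto ((hc.tendsto U).mono_left (nhdsWithin_le_nhds (s := Set.Iio U))) ?_
        filter_upwards [eventually_mem_nhdsWithin] with t ht
        exact (hlt t ht).le
    have hbound : ∀ k : ℕ, U ≤ tauk M a n k ω ∧ tauk M a n k ω ≤ U + 1/2^k := by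
      intro k
      have h : ∃ j : ℕ, j ≤ n * 2^k ∧ ω ∈ HitBy M a ((j : ℝ≥0) / 2^k) :=
        tauk_exists_iff.mpr hmem
      have htk : tauk M a n k ω = (Nat.find h : ℝ≥0) / 2^k := dif_pos h
      constructor
      · obtain ⟨t, ht1, ht2⟩ :=
          (mem_hitBy_iff hc h0 ha _).mp (Nat.find_spec h).2
        have htS : t ∈ S := ⟨ht1.trans (by rw [← htk]; exact tauk_le n k ω), ht2⟩
        calc U ≤ t := csInf_le (OrderBot.bddBelow S) htS
          _ ≤ (Nat.find h : ℝ≥0) / 2^k := ht1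
          _ = tauk M a n k ω := htk.symm
      · set j : ℕ := ⌈U * 2^k⌉₊ with hj
        have hj1 : U ≤ (j : ℝ≥0) / 2^k := by
          rw [le_div_iff₀ (by positivity)]
          exact Nat.le_ceil _
        have hj2 : j ≤ n * 2^k := by
          rw [hj, Nat.ceil_le]
          calc U * 2^k ≤ (n:ℝ≥0) * 2^k := mul_le_mul_left hUn _
            _ = ((n * 2^k : ℕ) : ℝ≥0) := by push_cast; ring
        have hPj : j ≤ n * 2^k ∧ ω ∈ HitBy M a ((j : ℝ≥0) / 2^k) :=
          ⟨hj2, (mem_hitBy_iff hc h0 ha _).mpr ⟨U, hj1, haU⟩⟩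
        have hfind : Nat.find h ≤ j := Nat.find_le hPj
        have hjle : (j : ℝ≥0) ≤ U * 2^k + 1 := (Nat.ceil_lt_add_one (zero_le)).le
        calc tauk M a n k ω = (Nat.find h : ℝ≥0) / 2^k := htk
          _ ≤ (j : ℝ≥0) / 2^k :=
              div_le_div_of_nonneg_right (by exact_mod_cast hfind) (by positivity)
          _ ≤ (U * 2^k + 1) / 2^k := div_le_div_of_nonneg_right hjle (by positivity)
          _ = U + 1/2^k := by field_simp
    have htau : Tendsto (fun k => tauk M a n k ω) atTop (𝓝 U) := by
      have hup : Tendsto (fun k : ℕ => U + 1/(2:ℝ≥0)^k) atTop (𝓝 (U + 0)) := by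
        refine tendsto_const_nhds.add ?_
        rw [← NNReal.tendsto_coe]
        have : ∀ k : ℕ, ((1/(2:ℝ≥0)^k : ℝ≥0) : ℝ) = (1/2:ℝ)^k := by
          intro k; push_cast; rw [div_pow, one_pow]
        simp_rw [this]
        exact tendsto_pow_atTop_nhds_zero_of_lt_one (by norm_num) (by norm_num)
      rw [add_zero] at hup
      exact tendsto_of_tendsto_of_tendsto_of_le_of_le tendsto_const_nhds hup
        (fun k => (hbound k).1) (fun k => (hbound k).2)
    have := (hc.tendsto U).comp htau
    rwa [hMU] at this
  · rw [if_neg hmem]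
    have : ∀ k : ℕ, tauk M a n k ω = (n : ℝ≥0) := by
      intro k
      exact dif_neg (fun h => hmem (tauk_exists_iff.mp h))
    simp_rw [this]
    exact tendsto_const_nhds


variable {m0 : MeasurableSpace Ω} {P : Measure Ω} [IsProbabilityMeasure P]
  {ℱ : Filtration ℝ≥0 m0} {M : ℝ≥0 → Ω → ℝ}

lemma hitBy_meas0 (ℱ : Filtration ℝ≥0 m0) (hadp : ∀ t, StronglyMeasurable[ℱ t] (M t))
    (a : ℝ) (s : ℝ≥0) : MeasurableSet (HitBy M a s) :=
  ℱ.le s _ (hitBy_measurableSet ℱ hadp a s)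

/-- The optional stopping identity at the capped hitting time. -/
lemma opt_stop (hmart : Martingale M ℱ P) (hcont : ∀ ω, Continuous fun t => M t ω)
    (hM0 : ∀ ω, M 0 ω = 0) {a : ℝ} (ha : 0 ≤ a) (n : ℕ) :
    ∫ ω in HitBy M a (n : ℝ≥0), M (n : ℝ≥0) ω ∂P
      = a * (P (HitBy M a (n : ℝ≥0))).toReal := by
  classical
  set H := HitBy M a (n : ℝ≥0) with hHdef
  have hadp : ∀ t, StronglyMeasurable[ℱ t] (M t) := fun t => hmart.stronglyAdapted t
  have hH : MeasurableSet H := hitBy_meas0 ℱ hadp a n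
  set Vv : Ω → ℝ := fun ω => if ω ∈ H then a else M (n : ℝ≥0) ω with hVdef
  have hVmeas : StronglyMeasurable Vv := by
    refine StronglyMeasurable.ite hH ?_ ?_
    · exact stronglyMeasurable_const
    · exact (hmart.stronglyMeasurable (n:ℝ≥0)).mono (ℱ.le _)
  have hVint : Integrable Vv P := by
    have hbound : ∀ ω, ‖Vv ω‖ ≤ |a| + ‖M (n:ℝ≥0) ω‖ := by
      intro ω
      simp only [hVdef, Real.norm_eq_abs]
      split_ifs
      · have := abs_nonneg (M (n:ℝ≥0) ω); linarith
      · have := abs_nonneg a; linarith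
    refine Integrable.mono' ((integrable_const |a|).add (hmart.integrable (n:ℝ≥0)).norm)
      hVmeas.aestronglyMeasurable (Eventually.of_forall hbound)
  -- stopping times
  have hτ : ∀ k, IsStoppingTime ℱ (fun ω => (tauk M a n k ω : WithTop ℝ≥0)) := fun k => tauk_isStoppingTime ℱ hadp a n k
  have hτle : ∀ k ω, (tauk M a n k ω : WithTop ℝ≥0) ≤ ((n : ℝ≥0) : WithTop ℝ≥0) := fun k ω => WithTop.coe_le_coe.mpr (tauk_le n k ω)
  haveI : ∀ k, SigmaFinite (P.trim ((hτ k).measurableSpace_le_of_le (hτle k))) := by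
    intro k
    infer_instance
  have hk : ∀ k, stoppedValue M (fun ω => (tauk M a n k ω : WithTop ℝ≥0))
      =ᵐ[P] P[M (n:ℝ≥0) | ((hτ k).measurableSpace)] := fun k =>
    hmart.stoppedValue_ae_eq_condExp_of_le_const_of_countable_range (hτ k) (hτle k)
      (by rw [show (fun ω => (tauk M a n k ω : WithTop ℝ≥0)) = ((↑) : ℝ≥0 → WithTop ℝ≥0) ∘ tauk M a n k from rfl, Set.range_comp]; exact (tauk_range_countable n k).image _)
  have hint_k : ∀ k, Integrable (stoppedValue M (fun ω => (tauk M a n k ω : WithTop ℝ≥0))) P := fun k =>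
    (integrable_condExp).congr (hk k).symm
  have hiEq : ∀ k, ∫ ω, stoppedValue M (fun ω => (tauk M a n k ω : WithTop ℝ≥0)) ω ∂P = ∫ ω, M (n:ℝ≥0) ω ∂P := by
    intro k
    rw [integral_congr_ae (hk k), integral_condExp ((hτ k).measurableSpace_le_of_le (hτle k))]
  have hunif : UnifIntegrable (fun k => stoppedValue M (fun ω => (tauk M a n k ω : WithTop ℝ≥0))) 1 P := by
    have h1 : UniformIntegrable
        (fun k => P[M (n:ℝ≥0) | ((hτ k).measurableSpace)]) 1 P :=
      (hmart.integrable (n:ℝ≥0)).uniformIntegrable_condExp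
        (fun k => (hτ k).measurableSpace_le_of_le (hτle k))
    exact h1.2.1.ae_eq (fun k => (hk k).symm)
  have hAESM : ∀ k, AEStronglyMeasurable (stoppedValue M (fun ω => (tauk M a n k ω : WithTop ℝ≥0))) P := fun k =>
    (stronglyMeasurable_condExp.mono ((hτ k).measurableSpace_le_of_le (hτle k))).aestronglyMeasurable.congr (hk k).symm
  have htendsto : ∀ᵐ ω ∂P, Tendsto (fun k => stoppedValue M (fun ω => (tauk M a n k ω : WithTop ℝ≥0)) ω) atTop (𝓝 (Vv ω)) := by
    refine Eventually.of_forall fun ω => ?_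
    have := tauk_tendsto (hcont ω) (hM0 ω) ha n
    simp only [stoppedValue, hVdef, hHdef]
    exact this
  have hVmem : MemLp Vv 1 P := memLp_one_iff_integrable.mpr hVint
  have hLp : Tendsto (fun k => eLpNorm (stoppedValue M (fun ω => (tauk M a n k ω : WithTop ℝ≥0)) - Vv) 1 P) atTop (𝓝 0) :=
    tendsto_Lp_finite_of_tendsto_ae le_rfl ENNReal.one_ne_top hAESM hVmem hunif htendsto
  have hlint : Tendsto (fun k => ∫⁻ ω, ‖stoppedValue M (fun ω => (tauk M a n k ω : WithTop ℝ≥0)) ω - Vv ω‖₊ ∂P)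
      atTop (𝓝 0) := by
    refine hLp.congr fun k => ?_
    rw [eLpNorm_one_eq_lintegral_enorm]
    simp [Pi.sub_apply]
    rfl
  have hVlim : Tendsto (fun k => ∫ ω, stoppedValue M (fun ω => (tauk M a n k ω : WithTop ℝ≥0)) ω ∂P) atTop
      (𝓝 (∫ ω, Vv ω ∂P)) :=
    tendsto_integral_of_L1 Vv hVint.aestronglyMeasurable (Eventually.of_forall hint_k) hlint
  have hVeq : ∫ ω, Vv ω ∂P = ∫ ω, M (n:ℝ≥0) ω ∂P := by
    have h2 : Tendsto (fun _ : ℕ => ∫ ω, M (n:ℝ≥0) ω ∂P) atTop (𝓝 (∫ ω, Vv ω ∂P)) := by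
      refine hVlim.congr fun k => hiEq k
    exact tendsto_nhds_unique (l := (atTop : Filter ℕ)) h2 tendsto_const_nhds
  -- split the integrals
  have hsplitV : ∫ ω, Vv ω ∂P = a * (P H).toReal + ∫ ω in Hᶜ, M (n:ℝ≥0) ω ∂P := by
    rw [← integral_add_compl hH hVint]
    congr 1
    · rw [show ∫ ω in H, Vv ω ∂P = ∫ _ω in H, a ∂P from
        setIntegral_congr_fun hH fun ω hω => if_pos hω]
      rw [setIntegral_const, smul_eq_mul, mul_comm, measureReal_def]
    · exact setIntegral_congr_fun hH.compl fun ω hω => if_neg hω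
  have hsplitM : ∫ ω, M (n:ℝ≥0) ω ∂P
      = ∫ ω in H, M (n:ℝ≥0) ω ∂P + ∫ ω in Hᶜ, M (n:ℝ≥0) ω ∂P :=
    (integral_add_compl hH (hmart.integrable (n:ℝ≥0))).symm
  rw [hVeq, hsplitM] at hsplitV
  linarith


/-- UI closure: `M n = E[g | ℱ n]` for the a.e. limit `g`. -/
lemma martingale_closure (hmart : Martingale M ℱ P) (hUI : UniformIntegrable M 1 P)
    {g : Ω → ℝ} (hg : MemLp g 1 P)
    (hlim' : ∀ᵐ ω ∂P, Tendsto (fun k : ℕ => M (k : ℝ≥0) ω) atTop (𝓝 (g ω)))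
    (n : ℝ≥0) : M n =ᵐ[P] P[g | ℱ n] := by
  have hgint : Integrable g P := memLp_one_iff_integrable.mp hg
  have hunif : UnifIntegrable (fun k : ℕ => M (k : ℝ≥0)) 1 P := by
    intro ε hε
    obtain ⟨δ, hδ, hh⟩ := hUI.2.1 hε
    exact ⟨δ, hδ, fun i s hs hμs => hh (i : ℝ≥0) s hs hμs⟩
  have hLp2 : Tendsto (fun k : ℕ => eLpNorm (M (k:ℝ≥0) - g) 1 P) atTop (𝓝 0) :=
    tendsto_Lp_finite_of_tendsto_ae le_rfl ENNReal.one_ne_top (fun k => hUI.1 _) hg hunif hlim'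
  have hbound : ∀ k : ℕ, n ≤ (k : ℝ≥0) →
      eLpNorm (M n - P[g | ℱ n]) 1 P ≤ eLpNorm (M (k:ℝ≥0) - g) 1 P := by
    intro k hk
    have h1 : M n - P[g | ℱ n] =ᵐ[P] P[M (k:ℝ≥0) - g | ℱ n] := by
      have hc1 : P[M (k:ℝ≥0) | ℱ n] =ᵐ[P] M n := hmart.condExp_ae_eq hk
      have hc2 : P[M (k:ℝ≥0) - g | ℱ n] =ᵐ[P] P[M (k:ℝ≥0) | ℱ n] - P[g | ℱ n] :=
        condExp_sub (hmart.integrable _) hgint _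
      filter_upwards [hc1, hc2] with ω h1 h2
      simp only [Pi.sub_apply] at h1 h2 ⊢
      rw [h2, h1]
    calc eLpNorm (M n - P[g | ℱ n]) 1 P = eLpNorm (P[M (k:ℝ≥0) - g | ℱ n]) 1 P :=
          eLpNorm_congr_ae h1
      _ ≤ eLpNorm (M (k:ℝ≥0) - g) 1 P := eLpNorm_one_condExp_le_eLpNorm _
  have hev : ∀ᶠ k : ℕ in atTop, eLpNorm (M n - P[g | ℱ n]) 1 P
      ≤ eLpNorm (M (k:ℝ≥0) - g) 1 P := by
    obtain ⟨K, hK⟩ := exists_nat_ge n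
    refine eventually_atTop.mpr ⟨K, fun k hk => hbound k ?_⟩
    exact hK.trans (by exact_mod_cast hk)
  have hzero : eLpNorm (M n - P[g | ℱ n]) 1 P ≤ 0 := ge_of_tendsto hLp2 hev
  have hzero' : eLpNorm (M n - P[g | ℱ n]) 1 P = 0 := le_antisymm hzero (zero_le)
  have hsm : AEStronglyMeasurable (M n - P[g | ℱ n]) P :=
    (hmart.integrable n).aestronglyMeasurable.sub
      (stronglyMeasurable_condExp.mono (ℱ.le n)).aestronglyMeasurable
  have := (eLpNorm_eq_zero_iff hsm one_ne_zero).mp hzero'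
  filter_upwards [this] with ω hω
  have hcalc : M n ω - (P[g | ℱ n]) ω = 0 := hω
  have : M n ω = (P[g | ℱ n]) ω := by linarith
  exact this

/-- Construction of an integrable strongly measurable version of `M∞`. -/
lemma exists_Minf' (hmart : Martingale M ℱ P) (hUI : UniformIntegrable M 1 P)
    {Minf : Ω → ℝ} (hlim : ∀ᵐ ω ∂P, Tendsto (fun t => M t ω) atTop (𝓝 (Minf ω))) :
    ∃ g : Ω → ℝ, StronglyMeasurable g ∧ g =ᵐ[P] Minf ∧ MemLp g 1 P ∧
      (∀ᵐ ω ∂P, Tendsto (fun k : ℕ => M (k : ℝ≥0) ω) atTop (𝓝 (g ω))) := by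
  have hnat : Tendsto (fun k : ℕ => (k : ℝ≥0)) atTop atTop := tendsto_natCast_atTop_atTop
  have h2 : ∀ᵐ ω ∂P, Tendsto (fun k : ℕ => M (k:ℝ≥0) ω) atTop (𝓝 (Minf ω)) :=
    hlim.mono fun ω h => h.comp hnat
  have haem : AEMeasurable Minf P := by
    refine aemeasurable_of_tendsto_metrizable_ae atTop
      (fun k : ℕ => ((hmart.stronglyMeasurable (k:ℝ≥0)).measurable.mono (ℱ.le _) le_rfl).aemeasurable) h2
  refine ⟨haem.mk Minf, haem.measurable_mk.stronglyMeasurable, haem.ae_eq_mk.symm, ?_, ?_⟩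
  · -- MemLp via Fatou
    refine ⟨haem.measurable_mk.stronglyMeasurable.aestronglyMeasurable, ?_⟩
    obtain ⟨C, hC⟩ := hUI.2.2
    have h3 : ∀ᵐ ω ∂P, Tendsto (fun k : ℕ => (‖M (k:ℝ≥0) ω‖₊ : ℝ≥0∞)) atTop
        (𝓝 (‖haem.mk Minf ω‖₊ : ℝ≥0∞)) := by
      filter_upwards [h2, haem.ae_eq_mk] with ω hω heq
      rw [← heq]
      exact ENNReal.tendsto_coe.mpr ((continuous_nnnorm.tendsto _).comp hω)
    have h4 : eLpNorm (haem.mk Minf) 1 P = ∫⁻ ω, (‖haem.mk Minf ω‖₊ : ℝ≥0∞) ∂P :=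
      eLpNorm_one_eq_lintegral_enorm
    rw [h4]
    have h5 : ∫⁻ ω, (‖haem.mk Minf ω‖₊ : ℝ≥0∞) ∂P
        = ∫⁻ ω, Filter.liminf (fun k : ℕ => (‖M (k:ℝ≥0) ω‖₊ : ℝ≥0∞)) atTop ∂P := by
      refine lintegral_congr_ae ?_
      filter_upwards [h3] with ω hω
      exact hω.liminf_eq.symm
    rw [h5]
    have h6 : ∫⁻ ω, Filter.liminf (fun k : ℕ => (‖M (k:ℝ≥0) ω‖₊ : ℝ≥0∞)) atTop ∂P
        ≤ Filter.liminf (fun k : ℕ => ∫⁻ ω, (‖M (k:ℝ≥0) ω‖₊ : ℝ≥0∞) ∂P) atTop := by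
      refine lintegral_liminf_le fun k => ?_
      exact ((hmart.stronglyMeasurable (k:ℝ≥0)).measurable.mono (ℱ.le _) le_rfl).nnnorm.coe_nnreal_ennreal
    refine lt_of_le_of_lt (h6.trans ?_) (ENNReal.coe_lt_top (r := C))
    have h7 : ∀ k : ℕ, ∫⁻ ω, (‖M (k:ℝ≥0) ω‖₊ : ℝ≥0∞) ∂P ≤ (C : ℝ≥0∞) := by
      intro k
      change ∫⁻ ω, ‖M (k:ℝ≥0) ω‖ₑ ∂P ≤ _
      rw [← eLpNorm_one_eq_lintegral_enorm]
      exact hC (k:ℝ≥0)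
    calc Filter.liminf (fun k : ℕ => ∫⁻ ω, (‖M (k:ℝ≥0) ω‖₊ : ℝ≥0∞) ∂P) atTop
        ≤ Filter.liminf (fun _ : ℕ => (C : ℝ≥0∞)) atTop :=
          Filter.liminf_le_liminf (Eventually.of_forall h7)
      _ = (C : ℝ≥0∞) := Filter.liminf_const _
  · filter_upwards [h2, haem.ae_eq_mk] with ω hω heq
    rwa [heq] at hω

/-- the limit optional stopping identity on the full hitting event. -/
lemma os_infty (hmart : Martingale M ℱ P) (hcont : ∀ ω, Continuous fun t => M t ω)
    (hM0 : ∀ ω, M 0 ω = 0)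
    {g : Ω → ℝ} (hgsm : StronglyMeasurable g) (hgmem : MemLp g 1 P)
    (hCL : ∀ n : ℝ≥0, M n =ᵐ[P] P[g | ℱ n])
    {a : ℝ} (ha : 0 ≤ a) :
    ∫ ω in (⋃ n : ℕ, HitBy M a (n:ℝ≥0)), g ω ∂P
      = a * (P (⋃ n : ℕ, HitBy M a (n:ℝ≥0))).toReal := by
  have hgint : Integrable g P := memLp_one_iff_integrable.mp hgmem
  have hadp : ∀ t, StronglyMeasurable[ℱ t] (M t) := fun t => hmart.stronglyAdapted t
  have hHm : ∀ n : ℕ, MeasurableSet (HitBy M a (n:ℝ≥0)) := fun n => hitBy_meas0 ℱ hadp a _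
  have hmono : Monotone fun n : ℕ => HitBy M a (n:ℝ≥0) := fun i j hij =>
    hitBy_mono_time (by exact_mod_cast hij)
  have hstep : ∀ n : ℕ, ∫ ω in HitBy M a (n:ℝ≥0), g ω ∂P
      = a * (P (HitBy M a (n:ℝ≥0))).toReal := by
    intro n
    have h1 : ∫ ω in HitBy M a (n:ℝ≥0), M (n:ℝ≥0) ω ∂P
        = ∫ ω in HitBy M a (n:ℝ≥0), (P[g | ℱ (n:ℝ≥0)]) ω ∂P :=
      setIntegral_congr_ae (hHm n) ((hCL (n:ℝ≥0)).mono fun ω h _ => h)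
    have h2 : ∫ ω in HitBy M a (n:ℝ≥0), (P[g | ℱ (n:ℝ≥0)]) ω ∂P
        = ∫ ω in HitBy M a (n:ℝ≥0), g ω ∂P :=
      setIntegral_condExp (ℱ.le (n:ℝ≥0)) hgint (hitBy_measurableSet ℱ hadp a (n:ℝ≥0))
    rw [← h2, ← h1]
    exact opt_stop hmart hcont hM0 ha n
  have hL : Tendsto (fun n : ℕ => ∫ ω in HitBy M a (n:ℝ≥0), g ω ∂P) atTop
      (𝓝 (∫ ω in (⋃ n : ℕ, HitBy M a (n:ℝ≥0)), g ω ∂P)) :=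
    tendsto_setIntegral_of_monotone hHm hmono hgint.integrableOn
  have hR : Tendsto (fun n : ℕ => a * (P (HitBy M a (n:ℝ≥0))).toReal) atTop
      (𝓝 (a * (P (⋃ n : ℕ, HitBy M a (n:ℝ≥0))).toReal)) := by
    have h1 : Tendsto (fun n : ℕ => P (HitBy M a (n:ℝ≥0))) atTop
        (𝓝 (P (⋃ n : ℕ, HitBy M a (n:ℝ≥0)))) := tendsto_measure_iUnion_atTop hmono
    have h2 := (ENNReal.tendsto_toReal (measure_ne_top P _)).comp h1
    exact h2.const_mul a
  refine tendsto_nhds_unique (hL.congr fun n => hstep n) hR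


/-- no escape below the supremum: `P(sup M = c) = 0` away from atoms of the limit law. -/
lemma key_null (hmart : Martingale M ℱ P) (hcont : ∀ ω, Continuous fun t => M t ω)
    (hUI : UniformIntegrable M 1 P) (hM0 : ∀ ω, M 0 ω = 0) {Minf : Ω → ℝ}
    (hlim : ∀ᵐ ω ∂P, Tendsto (fun t => M t ω) atTop (𝓝 (Minf ω)))
    {c : ℝ} (hc : 0 ≤ c) (hatom : P (Minf ⁻¹' {c}) = 0) :
    P {ω | Tendsto (fun t => M t ω) atTop (𝓝 (Minf ω)) ∧ (⨆ t, M t ω) = c} = 0 := by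
  obtain ⟨g, hgsm, hgeq, hgmem, hglim⟩ := exists_Minf' hmart hUI hlim
  have hCL : ∀ n : ℝ≥0, M n =ᵐ[P] P[g | ℱ n] := martingale_closure hmart hUI hgmem hglim
  have hgint : Integrable g P := memLp_one_iff_integrable.mp hgmem
  have hadp : ∀ t, StronglyMeasurable[ℱ t] (M t) := fun t => hmart.stronglyAdapted t
  set Hit : ℝ → Set Ω := fun a => ⋃ n : ℕ, HitBy M a (n:ℝ≥0) with hHitdef
  have hHitm : ∀ a, MeasurableSet (Hit a) := fun a =>
    MeasurableSet.iUnion fun n => hitBy_meas0 ℱ hadp a _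
  have hOS : ∀ a : ℝ, 0 ≤ a → ∫ ω in Hit a, g ω ∂P = a * (P (Hit a)).toReal :=
    fun a ha => os_infty hmart hcont hM0 hgsm hgmem hCL ha
  have hne : P {ω | ¬ (g ω = Minf ω)} = 0 := by
    rw [← ae_iff]; exact hgeq
  -- the main quantitative estimate
  have hquant : ∀ m l : ℕ,
      (P ((Hit c \ Hit (c + 1/(l+1))) ∩ {ω | g ω ≤ c - 1/(m+1)})).toReal
        ≤ 2 * (1/(l+1)) * (m+1) := by
    intro m l
    set δ : ℝ := 1/(l+1) with hδdef
    have hδ : 0 < δ := by positivity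
    set H := Hit c with hH
    set H' := Hit (c + δ) with hH'
    have hsub : H' ⊆ H := Set.iUnion_mono fun n => hitBy_mono_level (by linarith)
    have hHm : MeasurableSet H := hHitm c
    have hH'm : MeasurableSet H' := hHitm _
    have pH := (P H).toReal
    have hfin : ∀ s : Set Ω, (P s).toReal ≤ 1 := by
      intro s
      have h1 : (P s).toReal ≤ (P Set.univ).toReal :=
        ENNReal.toReal_mono (measure_ne_top _ _) (measure_mono (Set.subset_univ s))
      simpa using h1
    have hPdiff : (P (H \ H')).toReal = (P H).toReal - (P H').toReal := by
      rw [measure_diff hsub hH'm.nullMeasurableSet (measure_ne_top _ _)]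
      exact ENNReal.toReal_sub_of_le (measure_mono hsub) (measure_ne_top _ _)
    have hIdiff : ∫ ω in H \ H', g ω ∂P
        = c * (P H).toReal - (c + δ) * (P H').toReal := by
      rw [integral_diff hH'm hgint.integrableOn hsub, hOS c hc, hOS (c+δ) (by linarith)]
    set E := H \ H' with hE
    have hEm : MeasurableSet E := hHm.diff hH'm
    have hEint : ∫ ω in E, (c - g ω) ∂P
        = c * (P E).toReal - ∫ ω in E, g ω ∂P := by
      rw [integral_sub (integrableOn_const (C := c) (measure_ne_top _ _))
        hgint.integrableOn]
      congr 1
      rw [setIntegral_const, smul_eq_mul, mul_comm, measureReal_def]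
    have hEval : ∫ ω in E, (c - g ω) ∂P = δ * (P H').toReal := by
      rw [hEint, hIdiff, hE, hPdiff]; ring
    set D := E ∩ {ω | g ω ≤ c - 1/(m+1)} with hD
    have hDt : MeasurableSet {ω | g ω ≤ c - 1/(m+1)} :=
      hgsm.measurable measurableSet_Iic
    have hDm : MeasurableSet D := hEm.inter hDt
    have hsplit : ∫ ω in D, (c - g ω) ∂P + ∫ ω in E \ {ω | g ω ≤ c - 1/(m+1)}, (c - g ω) ∂P
        = ∫ ω in E, (c - g ω) ∂P := by
      exact integral_inter_add_diff hDt
        ((integrableOn_const (measure_ne_top _ _)).sub hgint.integrableOn)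
    have hDlow : (1/(m+1) : ℝ) * (P D).toReal ≤ ∫ ω in D, (c - g ω) ∂P := by
      rw [← measureReal_def, mul_comm, ← smul_eq_mul]
      refine setIntegral_ge_of_const_le hDm (measure_ne_top _ _) ?_ ?_
      · rintro ω ⟨-, hω⟩
        simp only [Set.mem_setOf_eq] at hω
        linarith
      · exact IntegrableOn.mono_set ((integrableOn_const (measure_ne_top _ _)).sub
          hgint.integrableOn) Set.inter_subset_left
    have hrest : -δ ≤ ∫ ω in E \ {ω | g ω ≤ c - 1/(m+1)}, (c - g ω) ∂P := by
      set s := E \ {ω | g ω ≤ c - 1/(m+1)} with hs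
      have hsm' : MeasurableSet s := hEm.diff hDt
      have hae : ∀ᵐ ω ∂P, ω ∈ s → -δ ≤ c - g ω := by
        filter_upwards [hlim, hgeq] with ω hω hgω hωs
        have hωH' : ω ∉ H' := fun hmem => (hωs.1).2 hmem
        have hallt : ∀ t : ℝ≥0, M t ω < c + δ := by
          intro t
          by_contra hcon
          push_neg at hcon
          obtain ⟨n, hn⟩ := exists_nat_ge t
          exact hωH' (Set.mem_iUnion.mpr ⟨n,
            (mem_hitBy_iff (hcont ω) (hM0 ω) (by linarith) _).mpr ⟨t, hn, hcon⟩⟩)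
        have hML : Minf ω ≤ c + δ :=
          le_of_tendsto hω (Eventually.of_forall fun t => (hallt t).le)
        rw [hgω]; linarith
      have h0 : ∫ ω in s, (-δ) ∂P ≤ ∫ ω in s, (c - g ω) ∂P := by
        refine setIntegral_mono_on_ae (integrableOn_const (measure_ne_top _ _))
          ((integrableOn_const (measure_ne_top _ _)).sub hgint.integrableOn)
          hsm' ?_
        filter_upwards [hae] with ω hω hωs
        exact hω hωs
      have hconst : ∫ ω in s, (-δ) ∂P = -δ * (P s).toReal := by
        rw [setIntegral_const, smul_eq_mul, mul_comm, measureReal_def]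
      have hδs : -δ ≤ -δ * (P s).toReal := by
        have := hfin s
        have h1 : (0:ℝ) ≤ (P s).toReal := ENNReal.toReal_nonneg
        nlinarith
      rw [hconst] at h0
      linarith
    have hδ1 : δ * (P H').toReal ≤ δ := by
      have := hfin H'
      nlinarith
    have hchain : (1/(m+1) : ℝ) * (P D).toReal - δ ≤ δ := by
      have h1 : (1/(m+1) : ℝ) * (P D).toReal + (-δ)
          ≤ ∫ ω in D, (c - g ω) ∂P + ∫ ω in E \ {ω | g ω ≤ c - 1/(m+1)}, (c - g ω) ∂P :=
        add_le_add hDlow hrest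
      rw [hsplit, hEval] at h1
      linarith
    have hm1 : (0:ℝ) < 1/(m+1) := by positivity
    rw [hδdef] at hchain
    have := hchain
    have hfinal : (P D).toReal ≤ 2 * (1/(l+1)) * (m+1) := by
      have hm' : ((m:ℝ)+1) * (1/((m:ℝ)+1)) = 1 := by field_simp
      nlinarith [hfin D]
    exact hfinal
  -- conclude
  set T := {ω | Tendsto (fun t => M t ω) atTop (𝓝 (Minf ω)) ∧ (⨆ t, M t ω) = c} with hT
  set Nm : ℕ → Set Ω := fun m => {ω | (ω ∈ T) ∧ g ω = Minf ω ∧ g ω ≤ c - 1/(m+1)} with hNm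
  have hNmD : ∀ m l : ℕ, Nm m ⊆ (Hit c \ Hit (c + 1/(l+1))) ∩ {ω | g ω ≤ c - 1/(m+1)} := by
    rintro m l ω ⟨⟨hω, hsup⟩, hgM, hgle⟩
    have hbdd := (bdd_of_tendsto (hcont ω) hω).1
    have hsuple : ∀ t : ℝ≥0, M t ω ≤ c := by
      intro t
      rw [← hsup]
      exact le_ciSup hbdd t
    have hδ : (0:ℝ) < 1/(l+1) := by positivity
    refine ⟨⟨?_, ?_⟩, hgle⟩
    · -- ω ∈ Hit c
      by_contra hnot
      have hallt : ∀ t : ℝ≥0, M t ω < c := by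
        intro t
        rcases lt_or_ge (M t ω) c with h | h
        · exact h
        · exfalso
          obtain ⟨n, hn⟩ := exists_nat_ge t
          exact hnot (Set.mem_iUnion.mpr ⟨n,
            (mem_hitBy_iff (hcont ω) (hM0 ω) hc _).mpr ⟨t, hn, h⟩⟩)
      -- then sup < c, contradiction
      have hm1 : (0:ℝ) < 1/((m:ℝ)+1) := by positivity
      have hLc : Minf ω < c := by rw [← hgM]; linarith
      set L := Minf ω with hL
      have hLlt : L < c := hLc
      have hε : (0:ℝ) < (c - L)/2 := by linarith
      obtain ⟨T₀, hT₀⟩ := Metric.tendsto_atTop.mp hω ((c - L)/2) hε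
      obtain ⟨tm, htm, hmax⟩ := (isCompact_Icc (a := (0:ℝ≥0)) (b := T₀)).exists_isMaxOn
        ⟨0, ⟨le_rfl, zero_le⟩⟩ (hcont ω).continuousOn
      have hmax' : ∀ u ∈ Set.Icc (0:ℝ≥0) T₀, M u ω ≤ M tm ω := fun u hu => hmax hu
      set B := max (M tm ω) ((L + c)/2) with hB
      have hBlt : B < c := by
        rw [hB]
        refine max_lt (hallt tm) (by linarith)
      have hle : ∀ t : ℝ≥0, M t ω ≤ B := by
        intro t
        rcases le_total t T₀ with h | h
        · exact le_max_of_le_left (hmax' t ⟨zero_le, h⟩)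
        · have := hT₀ t h
          rw [Real.dist_eq, abs_lt] at this
          refine le_max_of_le_right ?_
          linarith [this.2]
      have : (⨆ t, M t ω) ≤ B := ciSup_le hle
      rw [hsup] at this
      linarith
    · -- ω ∉ Hit (c+δ)
      intro hmem
      obtain ⟨n, hn⟩ := Set.mem_iUnion.mp hmem
      obtain ⟨t, -, hct⟩ := (mem_hitBy_iff (hcont ω) (hM0 ω) (by linarith) _).mp hn
      have := hsuple t
      linarith
  have hNm0 : ∀ m : ℕ, P (Nm m) = 0 := by
    intro m
    have hle : ∀ l : ℕ, (P (Nm m)).toReal ≤ 2 * (1/(l+1)) * (m+1) := by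
      intro l
      refine le_trans ?_ (hquant m l)
      exact ENNReal.toReal_mono (measure_ne_top _ _) (measure_mono (hNmD m l))
    have htend : Tendsto (fun l : ℕ => 2 * (1/((l:ℝ)+1)) * ((m:ℝ)+1)) atTop (𝓝 0) := by
      have h1 : Tendsto (fun l : ℕ => 1/((l:ℝ)+1)) atTop (𝓝 0) :=
        tendsto_one_div_add_atTop_nhds_zero_nat
      have := (h1.const_mul 2).mul_const ((m:ℝ)+1)
      simpa using this
    have h0 : (P (Nm m)).toReal ≤ 0 :=
      ge_of_tendsto htend (Eventually.of_forall hle)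
    have h1 : (P (Nm m)).toReal = 0 := le_antisymm h0 ENNReal.toReal_nonneg
    rw [ENNReal.toReal_eq_zero_iff] at h1
    exact h1.resolve_right (measure_ne_top _ _)
  have hTsub : T ⊆ {ω | ¬ (g ω = Minf ω)} ∪ (⋃ m, Nm m) ∪ (Minf ⁻¹' {c}) := by
    intro ω hωT
    by_cases hgM : g ω = Minf ω
    · rcases lt_or_ge (Minf ω) c with hlt | hge
      · obtain ⟨m, hm⟩ := exists_nat_one_div_lt (ε := c - Minf ω) (by linarith)
        refine Or.inl (Or.inr (Set.mem_iUnion.mpr ⟨m, ⟨hωT, hgM, ?_⟩⟩))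
        rw [hgM]
        push_cast at hm ⊢
        linarith
      · -- Minf ω = c
        obtain ⟨hω, hsup⟩ := hωT
        have hbdd := (bdd_of_tendsto (hcont ω) hω).1
        have hle : Minf ω ≤ c := by
          refine le_of_tendsto hω (Eventually.of_forall fun t => ?_)
          rw [← hsup]
          exact le_ciSup hbdd t
        exact Or.inr (le_antisymm hle hge)
    · exact Or.inl (Or.inl hgM)
  have hfinal : P T ≤ 0 := by
    calc P T ≤ P ({ω | ¬ (g ω = Minf ω)} ∪ (⋃ m, Nm m) ∪ (Minf ⁻¹' {c})) :=
        measure_mono hTsub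
      _ ≤ P ({ω | ¬ (g ω = Minf ω)} ∪ (⋃ m, Nm m)) + P (Minf ⁻¹' {c}) := measure_union_le _ _
      _ ≤ (P {ω | ¬ (g ω = Minf ω)} + P (⋃ m, Nm m)) + P (Minf ⁻¹' {c}) := by
          gcongr
          exact measure_union_le _ _
      _ ≤ (0 + ∑' m, P (Nm m)) + 0 := by
          rw [hne, hatom]
          gcongr
          exact measure_iUnion_le _
      _ = 0 := by simp [hNm0]
  exact le_antisymm hfinal (zero_le)


def Einf (M : ℝ≥0 → Ω → ℝ) (b : ℝ) : Set Ω :=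
  {ω | ∃ r : ℚ, b < (r:ℝ) ∧ ∀ q : ℚ, (r:ℝ) ≤ M (qt q) ω}
def Esup (M : ℝ≥0 → Ω → ℝ) (w : ℝ) : Set Ω :=
  {ω | ∃ r : ℚ, (r:ℝ) < w ∧ ∀ q : ℚ, M (qt q) ω ≤ (r:ℝ)}
def EinfC (M : ℝ≥0 → Ω → ℝ) (b : ℝ) : Set Ω := {ω | ∀ q : ℚ, b ≤ M (qt q) ω}
def EsupC (M : ℝ≥0 → Ω → ℝ) (w : ℝ) : Set Ω := {ω | ∀ q : ℚ, M (qt q) ω ≤ w}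

section meas
variable {m0 : MeasurableSpace Ω} {M : ℝ≥0 → Ω → ℝ}

lemma meas_Einf (hM : ∀ t, Measurable (M t)) (b : ℝ) : MeasurableSet (Einf M b) := by
  have : Einf M b = ⋃ r : ℚ, ⋃ _ : b < (r:ℝ), ⋂ q : ℚ, {ω | (r:ℝ) ≤ M (qt q) ω} := by
    ext ω; simp [Einf]
  rw [this]
  exact MeasurableSet.iUnion fun r => MeasurableSet.iUnion fun _ =>
    MeasurableSet.iInter fun q => measurableSet_le measurable_const (hM _)

lemma meas_Esup (hM : ∀ t, Measurable (M t)) (w : ℝ) : MeasurableSet (Esup M w) := by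
  have : Esup M w = ⋃ r : ℚ, ⋃ _ : (r:ℝ) < w, ⋂ q : ℚ, {ω | M (qt q) ω ≤ (r:ℝ)} := by
    ext ω; simp [Esup]
  rw [this]
  exact MeasurableSet.iUnion fun r => MeasurableSet.iUnion fun _ =>
    MeasurableSet.iInter fun q => measurableSet_le (hM _) measurable_const

lemma meas_EinfC (hM : ∀ t, Measurable (M t)) (b : ℝ) : MeasurableSet (EinfC M b) := by
  have : EinfC M b = ⋂ q : ℚ, {ω | b ≤ M (qt q) ω} := by ext ω; simp [EinfC]
  rw [this]
  exact MeasurableSet.iInter fun q => measurableSet_le measurable_const (hM _)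

lemma meas_EsupC (hM : ∀ t, Measurable (M t)) (w : ℝ) : MeasurableSet (EsupC M w) := by
  have : EsupC M w = ⋂ q : ℚ, {ω | M (qt q) ω ≤ w} := by ext ω; simp [EsupC]
  rw [this]
  exact MeasurableSet.iInter fun q => measurableSet_le (hM _) measurable_const
end meas

section pathwise
variable {M : ℝ≥0 → Ω → ℝ} {ω : Ω}

lemma mem_Einf_iff (hc : Continuous fun t => M t ω)
    (hbdd : BddBelow (Set.range fun t => M t ω)) {b : ℝ} :
    ω ∈ Einf M b ↔ b < ⨅ t, M t ω := by
  constructor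
  · rintro ⟨r, hbr, hr⟩
    have : ∀ t, (r:ℝ) ≤ M t ω := cont_ge_of_rat hc hr
    exact lt_of_lt_of_le hbr (le_ciInf this)
  · intro hb
    obtain ⟨r, hr1, hr2⟩ := exists_rat_btwn hb
    exact ⟨r, hr1, fun q => hr2.le.trans (ciInf_le hbdd (qt q))⟩

lemma mem_Esup_iff (hc : Continuous fun t => M t ω)
    (hbdd : BddAbove (Set.range fun t => M t ω)) {w : ℝ} :
    ω ∈ Esup M w ↔ (⨆ t, M t ω) < w := by
  constructor
  · rintro ⟨r, hrw, hr⟩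
    have : ∀ t, M t ω ≤ (r:ℝ) := cont_le_of_rat hc hr
    exact lt_of_le_of_lt (ciSup_le this) hrw
  · intro hw
    obtain ⟨r, hr1, hr2⟩ := exists_rat_btwn hw
    exact ⟨r, hr2, fun q => (le_ciSup hbdd (qt q)).trans hr1.le⟩

lemma mem_EinfC_iff (hc : Continuous fun t => M t ω)
    (hbdd : BddBelow (Set.range fun t => M t ω)) {b : ℝ} :
    ω ∈ EinfC M b ↔ b ≤ ⨅ t, M t ω := by
  constructor
  · intro h
    exact le_ciInf (cont_ge_of_rat hc h)
  · intro h q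
    exact h.trans (ciInf_le hbdd (qt q))

lemma mem_EsupC_iff (hc : Continuous fun t => M t ω)
    (hbdd : BddAbove (Set.range fun t => M t ω)) {w : ℝ} :
    ω ∈ EsupC M w ↔ (⨆ t, M t ω) ≤ w := by
  constructor
  · intro h
    exact ciSup_le (cont_le_of_rat hc h)
  · intro h q
    exact (le_ciSup hbdd (qt q)).trans h
end pathwise

section setmono
variable {M : ℝ≥0 → Ω → ℝ}

lemma Einf_anti {b b' : ℝ} (h : b ≤ b') : Einf M b' ⊆ Einf M b := by
  rintro ω ⟨r, h1, h2⟩; exact ⟨r, lt_of_le_of_lt h h1, h2⟩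

lemma Esup_mono {w w' : ℝ} (h : w ≤ w') : Esup M w ⊆ Esup M w' := by
  rintro ω ⟨r, h1, h2⟩; exact ⟨r, lt_of_lt_of_le h1 h, h2⟩

lemma Einf_subset_EinfC {b : ℝ} : Einf M b ⊆ EinfC M b := by
  rintro ω ⟨r, h1, h2⟩ q; exact h1.le.trans (h2 q)

lemma Esup_subset_EsupC {w : ℝ} : Esup M w ⊆ EsupC M w := by
  rintro ω ⟨r, h1, h2⟩ q; exact (h2 q).trans h1.le

lemma Einf_iUnion (b : ℝ) : (⋃ n : ℕ, Einf M (b + 1/(n+1))) = Einf M b := by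
  apply Set.Subset.antisymm
  · refine Set.iUnion_subset fun n => Einf_anti ?_
    have : (0:ℝ) < 1/((n:ℝ)+1) := by positivity
    linarith
  · rintro ω ⟨r, h1, h2⟩
    obtain ⟨n, hn⟩ := exists_nat_one_div_lt (ε := (r:ℝ) - b) (by linarith)
    refine Set.mem_iUnion.mpr ⟨n, r, ?_, h2⟩
    push_cast at hn ⊢
    linarith

lemma Esup_iUnion (w : ℝ) : (⋃ n : ℕ, Esup M (w - 1/(n+1))) = Esup M w := by
  apply Set.Subset.antisymm
  · refine Set.iUnion_subset fun n => Esup_mono ?_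
    have : (0:ℝ) < 1/((n:ℝ)+1) := by positivity
    linarith
  · rintro ω ⟨r, h1, h2⟩
    obtain ⟨n, hn⟩ := exists_nat_one_div_lt (ε := w - (r:ℝ)) (by linarith)
    refine Set.mem_iUnion.mpr ⟨n, r, ?_, h2⟩
    push_cast at hn ⊢
    linarith

lemma Einf_iInter (b : ℝ) : (⋂ n : ℕ, Einf M (b - 1/(n+1))) = EinfC M b := by
  apply Set.Subset.antisymm
  · intro ω hω q
    have h1 : ∀ n : ℕ, b - 1/((n:ℝ)+1) ≤ M (qt q) ω := by
      intro n
      obtain ⟨r, hr1, hr2⟩ := Set.mem_iInter.mp hω n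
      exact hr1.le.trans (hr2 q)
    have hten : Tendsto (fun n : ℕ => b - 1/((n:ℝ)+1)) atTop (𝓝 (b - 0)) :=
      tendsto_const_nhds.sub tendsto_one_div_add_atTop_nhds_zero_nat
    rw [sub_zero] at hten
    exact le_of_tendsto hten (Eventually.of_forall h1)
  · intro ω hω
    refine Set.mem_iInter.mpr fun n => ?_
    have hpos : (0:ℝ) < 1/((n:ℝ)+1) := by positivity
    obtain ⟨r, hr1, hr2⟩ := exists_rat_btwn (show b - 1/((n:ℝ)+1) < b by linarith)
    exact ⟨r, hr1, fun q => hr2.le.trans (hω q)⟩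

lemma Esup_iInter (w : ℝ) : (⋂ n : ℕ, Esup M (w + 1/(n+1))) = EsupC M w := by
  apply Set.Subset.antisymm
  · intro ω hω q
    have h1 : ∀ n : ℕ, M (qt q) ω ≤ w + 1/((n:ℝ)+1) := by
      intro n
      obtain ⟨r, hr1, hr2⟩ := Set.mem_iInter.mp hω n
      exact (hr2 q).trans hr1.le
    have hten : Tendsto (fun n : ℕ => w + 1/((n:ℝ)+1)) atTop (𝓝 (w + 0)) :=
      tendsto_const_nhds.add tendsto_one_div_add_atTop_nhds_zero_nat
    rw [add_zero] at hten
    exact ge_of_tendsto hten (Eventually.of_forall h1)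
  · intro ω hω
    refine Set.mem_iInter.mpr fun n => ?_
    have hpos : (0:ℝ) < 1/((n:ℝ)+1) := by positivity
    obtain ⟨r, hr1, hr2⟩ := exists_rat_btwn (show w < w + 1/((n:ℝ)+1) by linarith)
    exact ⟨r, hr2, fun q => (hω q).trans hr1.le⟩
end setmono

lemma real_iSup_neg {ι : Type*} (f : ι → ℝ) : (⨆ t, -(f t)) = -(⨅ t, f t) := by
  have h1 : Set.range (fun t => -f t) = -(Set.range f) := by
    ext x
    simp only [Set.mem_range, Set.mem_neg]
    constructor
    · rintro ⟨t, rfl⟩; exact ⟨t, by rw [neg_neg]⟩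
    · rintro ⟨t, ht⟩; exact ⟨t, by rw [ht, neg_neg]⟩
  rw [iSup, iInf, h1, Real.sInf_def, neg_neg]


end StMAux

/-- `p(b,b̄) = P(inf M > b and sup M < b̄)`. -/
noncomputable def pfun {Ω : Type*} [MeasurableSpace Ω] (P : Measure Ω)
    (M : ℝ≥0 → Ω → ℝ) (lb ub : ℝ) : ℝ :=
  (P {ω | lb < (⨅ t, M t ω) ∧ (⨆ t, M t ω) < ub}).toReal

theorem stmt17 {Ω : Type*} {m0 : MeasurableSpace Ω} (P : Measure Ω)
    [IsProbabilityMeasure P] (ℱ : Filtration ℝ≥0 m0)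
    (M : ℝ≥0 → Ω → ℝ) (Minf : Ω → ℝ)
    (hmart : Martingale M ℱ P)
    (hcont : ∀ ω, Continuous fun t => M t ω)
    (hUI : UniformIntegrable M 1 P)
    (hM0 : ∀ ω, M 0 ω = 0)
    (hlim : ∀ᵐ ω ∂P, Tendsto (fun t => M t ω) atTop (𝓝 (Minf ω))) :
    (∀ lb ub : ℝ, lb ≤ 0 → 0 ≤ ub →
      P (Minf ⁻¹' {lb}) = 0 → P (Minf ⁻¹' {ub}) = 0 →
      ContinuousAt (fun x : ℝ × ℝ => pfun P M x.1 x.2) (lb, ub)) ∧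
    (∀ lb ub : ℝ, lb ≤ 0 → 0 ≤ ub →
      ContinuousWithinAt (fun u => pfun P M u ub) (Ici lb) lb) ∧
    (∀ lb ub : ℝ, lb ≤ 0 → 0 ≤ ub →
      ContinuousWithinAt (fun w => pfun P M lb w) (Iic ub) ub) := by
  classical
  have hadp : ∀ t, Measurable (M t) := fun t =>
    ((hmart.stronglyAdapted t).measurable).mono (ℱ.le t) le_rfl
  set A : Set Ω := {ω | Tendsto (fun t => M t ω) atTop (𝓝 (Minf ω))} with hAdef
  have hAc : P Aᶜ = 0 := by
    have h := ae_iff.mp hlim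
    simpa [hAdef, Set.compl_setOf] using h
  have hPcongr : ∀ S₁ S₂ : Set Ω, S₁ ∩ A = S₂ ∩ A → P S₁ = P S₂ := by
    have half : ∀ S₁ S₂ : Set Ω, S₁ ∩ A = S₂ ∩ A → P S₁ ≤ P S₂ := by
      intro S₁ S₂ h
      have hsub : S₁ ⊆ (S₂ ∩ A) ∪ Aᶜ := by
        intro ω hω
        by_cases hA : ω ∈ A
        · have : ω ∈ S₁ ∩ A := ⟨hω, hA⟩
          rw [h] at this
          exact Or.inl this
        · exact Or.inr hA
      calc P S₁ ≤ P ((S₂ ∩ A) ∪ Aᶜ) := measure_mono hsub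
        _ ≤ P (S₂ ∩ A) + P Aᶜ := measure_union_le _ _
        _ = P (S₂ ∩ A) := by rw [hAc, add_zero]
        _ ≤ P S₂ := measure_mono Set.inter_subset_left
    exact fun S₁ S₂ h => le_antisymm (half _ _ h) (half _ _ h.symm)
  have hpfun : ∀ b w : ℝ, pfun P M b w = (P (Einf M b ∩ Esup M w)).toReal := by
    intro b w
    unfold pfun
    congr 1
    refine hPcongr _ _ ?_
    ext ω
    simp only [Set.mem_inter_iff, Set.mem_setOf_eq]
    constructor
    · rintro ⟨⟨h1, h2⟩, hA⟩
      obtain ⟨hba, hbb⟩ := bdd_of_tendsto (hcont ω) hA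
      exact ⟨⟨(mem_Einf_iff (hcont ω) hbb).mpr h1, (mem_Esup_iff (hcont ω) hba).mpr h2⟩, hA⟩
    · rintro ⟨⟨h1, h2⟩, hA⟩
      obtain ⟨hba, hbb⟩ := bdd_of_tendsto (hcont ω) hA
      exact ⟨⟨(mem_Einf_iff (hcont ω) hbb).mp h1, (mem_Esup_iff (hcont ω) hba).mp h2⟩, hA⟩
  set F : ℝ → ℝ → ℝ := fun b w => (P (Einf M b ∩ Esup M w)).toReal with hFdef
  have hFmono : ∀ {b b' w w' : ℝ}, b ≤ b' → w' ≤ w → F b' w' ≤ F b w := by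
    intro b b' w w' hb hw
    exact ENNReal.toReal_mono (measure_ne_top _ _)
      (measure_mono (Set.inter_subset_inter (Einf_anti hb) (Esup_mono hw)))
  have hofrac : ∀ n : ℕ, (0:ℝ) < 1/((n:ℝ)+1) := fun n => by positivity
  have hfrac_anti : ∀ {n m : ℕ}, n ≤ m → (1:ℝ)/((m:ℝ)+1) ≤ 1/((n:ℝ)+1) := by
    intro n m h
    have : ((n:ℝ)+1) ≤ ((m:ℝ)+1) := by exact_mod_cast Nat.succ_le_succ h
    exact one_div_le_one_div_of_le (by positivity) this
  -- inner (monotone-union) convergence, two-sided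
  have hinner : ∀ lb ub : ℝ,
      Tendsto (fun n : ℕ => F (lb + 1/(n+1)) (ub - 1/(n+1))) atTop (𝓝 (F lb ub)) := by
    intro lb ub
    have hmonoX : Monotone fun n : ℕ => Einf M (lb + 1/(n+1)) := fun n m h =>
      Einf_anti (by have := hfrac_anti h; push_cast; linarith)
    have hmonoY : Monotone fun n : ℕ => Esup M (ub - 1/(n+1)) := fun n m h =>
      Esup_mono (by have := hfrac_anti h; push_cast; linarith)
    have hmono : Monotone fun n : ℕ => Einf M (lb + 1/(n+1)) ∩ Esup M (ub - 1/(n+1)) :=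
      fun n m h => Set.inter_subset_inter (hmonoX h) (hmonoY h)
    have hun : (⋃ n : ℕ, Einf M (lb + 1/(n+1)) ∩ Esup M (ub - 1/(n+1)))
        = Einf M lb ∩ Esup M ub := by
      rw [Set.iUnion_inter_of_monotone hmonoX hmonoY, Einf_iUnion, Esup_iUnion]
    have h1 := tendsto_measure_iUnion_atTop (μ := P) hmono
    rw [hun] at h1
    exact (ENNReal.tendsto_toReal (measure_ne_top _ _)).comp h1
  have hinner1 : ∀ lb ub : ℝ,
      Tendsto (fun n : ℕ => F (lb + 1/(n+1)) ub) atTop (𝓝 (F lb ub)) := by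
    intro lb ub
    have hmonoX : Monotone fun n : ℕ => Einf M (lb + 1/(n+1)) := fun n m h =>
      Einf_anti (by have := hfrac_anti h; push_cast; linarith)
    have hmonoY : Monotone fun _ : ℕ => Esup M ub := fun _ _ _ => le_rfl
    have hmono : Monotone fun n : ℕ => Einf M (lb + 1/(n+1)) ∩ Esup M ub :=
      fun n m h => Set.inter_subset_inter (hmonoX h) le_rfl
    have hun : (⋃ n : ℕ, Einf M (lb + 1/(n+1)) ∩ Esup M ub) = Einf M lb ∩ Esup M ub := by
      rw [Set.iUnion_inter_of_monotone hmonoX hmonoY]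
      rw [Einf_iUnion, Set.iUnion_const]
    have h1 := tendsto_measure_iUnion_atTop (μ := P) hmono
    rw [hun] at h1
    exact (ENNReal.tendsto_toReal (measure_ne_top _ _)).comp h1
  have hinner2 : ∀ lb ub : ℝ,
      Tendsto (fun n : ℕ => F lb (ub - 1/(n+1))) atTop (𝓝 (F lb ub)) := by
    intro lb ub
    have hmonoX : Monotone fun _ : ℕ => Einf M lb := fun _ _ _ => le_rfl
    have hmonoY : Monotone fun n : ℕ => Esup M (ub - 1/(n+1)) := fun n m h =>
      Esup_mono (by have := hfrac_anti h; push_cast; linarith)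
    have hmono : Monotone fun n : ℕ => Einf M lb ∩ Esup M (ub - 1/(n+1)) :=
      fun n m h => Set.inter_subset_inter le_rfl (hmonoY h)
    have hun : (⋃ n : ℕ, Einf M lb ∩ Esup M (ub - 1/(n+1))) = Einf M lb ∩ Esup M ub := by
      rw [Set.iUnion_inter_of_monotone hmonoX hmonoY]
      rw [Esup_iUnion, Set.iUnion_const]
    have h1 := tendsto_measure_iUnion_atTop (μ := P) hmono
    rw [hun] at h1
    exact (ENNReal.tendsto_toReal (measure_ne_top _ _)).comp h1
  refine ⟨?_, ?_, ?_⟩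
  · -- joint continuity
    intro lb ub hlb hub hPlb hPub
    -- the two null boundary sets
    have hzsup : P {ω | Tendsto (fun t => M t ω) atTop (𝓝 (Minf ω)) ∧ (⨆ t, M t ω) = ub} = 0 :=
      key_null hmart hcont hUI hM0 hlim hub hPub
    have hzinf : P {ω | Tendsto (fun t => M t ω) atTop (𝓝 (Minf ω)) ∧ (⨅ t, M t ω) = lb} = 0 := by
      have hmartN : Martingale (-M) ℱ P := hmart.neg
      have hcontN : ∀ ω, Continuous fun t => (-M) t ω := by
        intro ω
        exact (hcont ω).neg
      have hUIN : UniformIntegrable (-M) 1 P := by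
        obtain ⟨hmeas, hunif, C, hC⟩ := hUI
        exact ⟨fun i => by simpa [Pi.neg_apply] using (hmeas i).neg, hunif.neg,
          C, fun i => by simpa [Pi.neg_apply, eLpNorm_neg] using hC i⟩
      have hM0N : ∀ ω, (-M) 0 ω = 0 := fun ω => by simp [Pi.neg_apply, hM0 ω]
      have hlimN : ∀ᵐ ω ∂P, Tendsto (fun t => (-M) t ω) atTop (𝓝 ((fun ω => -Minf ω) ω)) := by
        filter_upwards [hlim] with ω hω
        simpa [Pi.neg_apply] using hω.neg
      have hatomN : P ((fun ω => -Minf ω) ⁻¹' {-lb}) = 0 := by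
        have hseteq : ((fun ω => -Minf ω) ⁻¹' {-lb}) = Minf ⁻¹' {lb} := by
          ext ω; simp [neg_eq_iff_eq_neg]
        rw [hseteq]; exact hPlb
      have hkey := key_null hmartN hcontN hUIN hM0N hlimN (c := -lb) (by linarith) hatomN
      have hseteq : {ω | Tendsto (fun t => (-M) t ω) atTop (𝓝 ((fun ω => -Minf ω) ω))
            ∧ (⨆ t, (-M) t ω) = -lb}
          = {ω | Tendsto (fun t => M t ω) atTop (𝓝 (Minf ω)) ∧ (⨅ t, M t ω) = lb} := by
        ext ω
        simp only [Set.mem_setOf_eq, Pi.neg_apply]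
        constructor
        · rintro ⟨h1, h2⟩
          refine ⟨by simpa using h1.neg, ?_⟩
          rw [real_iSup_neg (fun t => M t ω)] at h2
          exact neg_injective h2
        · rintro ⟨h1, h2⟩
          refine ⟨by simpa using h1.neg, ?_⟩
          rw [real_iSup_neg (fun t => M t ω), h2]
      rw [hseteq] at hkey
      exact hkey
    -- boundary identification
    have hbd : P (EinfC M lb ∩ EsupC M ub) = P (Einf M lb ∩ Esup M ub) := by
      refine le_antisymm ?_
        (measure_mono (Set.inter_subset_inter Einf_subset_EinfC Esup_subset_EsupC))
      have hsub : EinfC M lb ∩ EsupC M ub ⊆ (Einf M lb ∩ Esup M ub) ∪ (Aᶜ ∪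
          ({ω | Tendsto (fun t => M t ω) atTop (𝓝 (Minf ω)) ∧ (⨅ t, M t ω) = lb} ∪
           {ω | Tendsto (fun t => M t ω) atTop (𝓝 (Minf ω)) ∧ (⨆ t, M t ω) = ub})) := by
        rintro ω ⟨h1, h2⟩
        by_cases hA : ω ∈ A
        · obtain ⟨hba, hbb⟩ := bdd_of_tendsto (hcont ω) hA
          have hinf : lb ≤ ⨅ t, M t ω := (mem_EinfC_iff (hcont ω) hbb).mp h1
          have hsup : (⨆ t, M t ω) ≤ ub := (mem_EsupC_iff (hcont ω) hba).mp h2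
          rcases eq_or_lt_of_le hinf with heq | hlt
          · exact Or.inr (Or.inr (Or.inl ⟨hA, heq.symm⟩))
          rcases eq_or_lt_of_le hsup with heq | hlt2
          · exact Or.inr (Or.inr (Or.inr ⟨hA, heq⟩))
          exact Or.inl ⟨(mem_Einf_iff (hcont ω) hbb).mpr hlt,
            (mem_Esup_iff (hcont ω) hba).mpr hlt2⟩
        · exact Or.inr (Or.inl hA)
      calc P (EinfC M lb ∩ EsupC M ub) ≤ P ((Einf M lb ∩ Esup M ub) ∪ (Aᶜ ∪ (_ ∪ _))) :=
            measure_mono hsub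
        _ ≤ P (Einf M lb ∩ Esup M ub) + P (Aᶜ ∪ (_ ∪ _)) := measure_union_le _ _
        _ ≤ P (Einf M lb ∩ Esup M ub) + (P Aᶜ + P (_ ∪ _)) := by
            gcongr
            exact measure_union_le _ _
        _ ≤ P (Einf M lb ∩ Esup M ub) + (P Aᶜ + (P _ + P _)) := by
            gcongr
            exact measure_union_le _ _
        _ = P (Einf M lb ∩ Esup M ub) := by
            rw [hAc, hzinf, hzsup]
            simp
    -- outer (antitone-intersection) convergence
    have houter : Tendsto (fun n : ℕ => F (lb - 1/(n+1)) (ub + 1/(n+1))) atTop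
        (𝓝 (F lb ub)) := by
      have hantiX : Antitone fun n : ℕ => Einf M (lb - 1/(n+1)) := fun n m h =>
        Einf_anti (by have := hfrac_anti h; push_cast; linarith)
      have hantiY : Antitone fun n : ℕ => Esup M (ub + 1/(n+1)) := fun n m h =>
        Esup_mono (by have := hfrac_anti h; push_cast; linarith)
      have hanti : Antitone fun n : ℕ => Einf M (lb - 1/(n+1)) ∩ Esup M (ub + 1/(n+1)) :=
        fun n m h => Set.inter_subset_inter (hantiX h) (hantiY h)
      have hin : (⋂ n : ℕ, Einf M (lb - 1/(n+1)) ∩ Esup M (ub + 1/(n+1)))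
          = EinfC M lb ∩ EsupC M ub := by
        rw [Set.iInter_inter_distrib, Einf_iInter, Esup_iInter]
      have h1 := tendsto_measure_iInter_atTop (μ := P)
        (fun n => ((meas_Einf hadp _).inter (meas_Esup hadp _)).nullMeasurableSet)
        hanti ⟨0, measure_ne_top _ _⟩
      rw [hin, hbd] at h1
      exact (ENNReal.tendsto_toReal (measure_ne_top _ _)).comp h1
    -- epsilon-delta
    have hfun : (fun x : ℝ × ℝ => pfun P M x.1 x.2) = fun x : ℝ × ℝ => F x.1 x.2 :=
      funext fun x => hpfun x.1 x.2
    rw [hfun]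
    rw [Metric.continuousAt_iff]
    intro ε hε
    obtain ⟨N₁, hN₁⟩ := Metric.tendsto_atTop.mp (hinner lb ub) (ε/2) (by linarith)
    obtain ⟨N₂, hN₂⟩ := Metric.tendsto_atTop.mp houter (ε/2) (by linarith)
    set n := max N₁ N₂ with hn
    refine ⟨1/((n:ℝ)+1), hofrac n, ?_⟩
    intro x hx
    rw [Prod.dist_eq] at hx
    have hx1 : |x.1 - lb| < 1/((n:ℝ)+1) := by
      rw [← Real.dist_eq]
      exact lt_of_le_of_lt (le_max_left _ _) hx
    have hx2 : |x.2 - ub| < 1/((n:ℝ)+1) := by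
      rw [← Real.dist_eq]
      exact lt_of_le_of_lt (le_max_right _ _) hx
    rw [abs_lt] at hx1 hx2
    have hlow : F (lb + 1/(n+1)) (ub - 1/(n+1)) ≤ F x.1 x.2 :=
      hFmono (by push_cast; linarith [hx1.2]) (by push_cast; linarith [hx2.1])
    have hhigh : F x.1 x.2 ≤ F (lb - 1/(n+1)) (ub + 1/(n+1)) :=
      hFmono (by push_cast; linarith [hx1.1]) (by push_cast; linarith [hx2.2])
    have h1 := hN₁ n (le_max_left _ _)
    have h2 := hN₂ n (le_max_right _ _)
    rw [Real.dist_eq, abs_lt] at h1 h2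
    rw [Real.dist_eq, abs_lt]
    constructor <;> [linarith [h1.1, hhigh]; linarith [h2.2, hlow]]
  · -- right-continuity in lb
    intro lb ub hlb hub
    have hfun : (fun u : ℝ => pfun P M u ub) = fun u : ℝ => F u ub :=
      funext fun u => hpfun u ub
    rw [hfun]
    rw [Metric.continuousWithinAt_iff]
    intro ε hε
    obtain ⟨N, hN⟩ := Metric.tendsto_atTop.mp (hinner1 lb ub) ε hε
    refine ⟨1/((N:ℝ)+1), hofrac N, ?_⟩
    intro y hy hdist
    rw [Real.dist_eq] at hdist
    rw [abs_lt] at hdist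
    have hylb : lb ≤ y := hy
    have h1 : F y ub ≤ F lb ub := hFmono hylb le_rfl
    have h2 : F (lb + 1/(N+1)) ub ≤ F y ub :=
      hFmono (by push_cast; linarith [hdist.2]) le_rfl
    have h3 := hN N le_rfl
    rw [Real.dist_eq, abs_lt] at h3
    rw [Real.dist_eq, abs_lt]
    constructor <;> [linarith [h3.1]; linarith [h3.1]]
  · -- left-continuity in ub
    intro lb ub hlb hub
    have hfun : (fun w : ℝ => pfun P M lb w) = fun w : ℝ => F lb w :=
      funext fun w => hpfun lb w
    rw [hfun]
    rw [Metric.continuousWithinAt_iff]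
    intro ε hε
    obtain ⟨N, hN⟩ := Metric.tendsto_atTop.mp (hinner2 lb ub) ε hε
    refine ⟨1/((N:ℝ)+1), hofrac N, ?_⟩
    intro y hy hdist
    rw [Real.dist_eq] at hdist
    rw [abs_lt] at hdist
    have hyub : y ≤ ub := hy
    have h1 : F lb y ≤ F lb ub := hFmono le_rfl hyub
    have h2 : F lb (ub - 1/(N+1)) ≤ F lb y :=
      hFmono le_rfl (by push_cast; linarith [hdist.1])
    have h3 := hN N le_rfl
    rw [Real.dist_eq, abs_lt] at h3
    rw [Real.dist_eq, abs_lt]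
    constructor <;> [linarith [h3.1]; linarith [h3.1]]
end

section
/- Let (M_t) be a continuous uniformly integrable martingale with M_0 = 0, and suppose p(b,b̄) = P(inf M > b, sup M < b̄) is discontinuous at (b,b̄), i.e. P(inf M ≥ b, sup M ≤ b̄) > P(inf M > b, sup M < b̄). Then at least one of the events {inf M > b, sup M = b̄} and {inf M = b, sup M < b̄} has positive probability, while the event {inf M = b and sup M = b̄} has probability zero. -/
open MeasureTheory Set Filter Topology
open scoped NNReal ENNReal

lemma stmt19_vitali {Ω : Type*} {m0 : MeasurableSpace Ω} {P : Measure Ω} [IsFiniteMeasure P]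
    {f : ℕ → Ω → ℝ} {g : Ω → ℝ}
    (hui : UniformIntegrable f 1 P)
    (hae : ∀ᵐ ω ∂P, Tendsto (fun k => f k ω) atTop (𝓝 (g ω))) :
    MemLp g 1 P ∧ Tendsto (fun k => ∫ ω, f k ω ∂P) atTop (𝓝 (∫ ω, g ω ∂P)) := by
  obtain ⟨hmeas, huif, C, hC⟩ := hui
  have hgmeas : AEStronglyMeasurable g P := aestronglyMeasurable_of_tendsto_ae atTop hmeas hae
  have hgbd : eLpNorm g 1 P ≤ C := by
    refine le_trans (Lp.eLpNorm_lim_le_liminf_eLpNorm hmeas g hae) ?_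
    exact liminf_le_of_le (by isBoundedDefault) (fun b hb => by
      obtain ⟨n, hn⟩ := hb.exists
      exact hn.trans (hC n))
  have hgmem : MemLp g 1 P := ⟨hgmeas, lt_of_le_of_lt hgbd ENNReal.coe_lt_top⟩
  have hint : ∀ n, Integrable (f n) P := fun n =>
    memLp_one_iff_integrable.mp ⟨hmeas n, lt_of_le_of_lt (hC n) ENNReal.coe_lt_top⟩
  refine ⟨hgmem, ?_⟩
  refine tendsto_integral_of_L1' g (memLp_one_iff_integrable.mp hgmem).aestronglyMeasurable
    (Eventually.of_forall hint) ?_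
  exact tendsto_Lp_finite_of_tendsto_ae le_rfl ENNReal.one_ne_top hmeas hgmem huif hae

namespace Stmt19Aux

variable {Ω : Type*}

def Bset (M : ℝ≥0 → Ω → ℝ) (v : ℝ) : Set Ω := {ω | ∃ s, v ≤ M s ω}

noncomputable def rho (M : ℝ≥0 → Ω → ℝ) (v : ℝ) (ω : Ω) : ℝ≥0 := sInf {s | v ≤ M s ω}

variable {M : ℝ≥0 → Ω → ℝ} {v : ℝ} {ω : Ω}

lemma rho_mem (hc : Continuous fun t => M t ω) (hB : ω ∈ Bset M v) :
    v ≤ M (rho M v ω) ω := by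
  have hcl : IsClosed {s : ℝ≥0 | v ≤ M s ω} := isClosed_le continuous_const hc
  exact hcl.csInf_mem hB (OrderBot.bddBelow _)

lemma rho_le_of (hvs : v ≤ M s ω) : rho M v ω ≤ s :=
  csInf_le (OrderBot.bddBelow _) hvs

lemma rho_eq (hc : Continuous fun t => M t ω) (h0 : M 0 ω = 0) (hv : 0 < v)
    (hB : ω ∈ Bset M v) : M (rho M v ω) ω = v := by
  have h1 : v ≤ M (rho M v ω) ω := rho_mem hc hB
  have h2 : v ∈ Icc (M 0 ω) (M (rho M v ω) ω) := ⟨by rw [h0]; exact hv.le, h1⟩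
  obtain ⟨s, hs, hsv⟩ := intermediate_value_Icc (zero_le) hc.continuousOn h2
  have h3 : rho M v ω ≤ s := rho_le_of (le_of_eq hsv.symm)
  have h4 : s = rho M v ω := le_antisymm hs.2 h3
  rw [← h4]; exact hsv

lemma exists_le_iff (hc : Continuous fun t => M t ω) (a : ℝ≥0) :
    (∃ s ≤ a, v ≤ M s ω) ↔
      ∀ j : ℕ, ∃ q : ℚ, v - 1 / (j + 1) < M (min (Real.toNNReal q) a) ω := by
  constructor
  · rintro ⟨s, hsa, hvs⟩ j
    have hj : (0:ℝ) < 1 / (j + 1) := by positivity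
    obtain ⟨δ, hδ, hδ'⟩ := Metric.continuousAt_iff.1 hc.continuousAt (1 / (j + 1)) hj
    obtain ⟨q, hq1, hq2⟩ := exists_rat_btwn (lt_add_of_pos_right (s:ℝ) hδ)
    have hq0 : (0:ℝ) ≤ (q:ℝ) := le_trans s.coe_nonneg hq1.le
    have hsq : s ≤ Real.toNNReal q := by
      rw [Real.le_toNNReal_iff_coe_le hq0]; exact hq1.le
    set t := min (Real.toNNReal q) a with ht
    have hst : s ≤ t := le_min hsq hsa
    have htq : (t:ℝ) ≤ (q:ℝ) := by
      refine le_trans ?_ (Real.coe_toNNReal q hq0).le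
      exact_mod_cast min_le_left _ _
    have hdist : dist t s < δ := by
      rw [NNReal.dist_eq, abs_of_nonneg (sub_nonneg.2 (show (s:ℝ) ≤ t by exact_mod_cast hst))]
      have : (t:ℝ) - s < δ := by linarith
      exact this
    have := hδ' hdist
    rw [Real.dist_eq, abs_lt] at this
    refine ⟨q, ?_⟩
    have := this.1
    linarith
  · intro h
    obtain ⟨s, hsmem, hmax⟩ := isCompact_Icc.exists_isMaxOn (⟨0, by simp⟩ : (Icc (0:ℝ≥0) a).Nonempty)
      hc.continuousOn
    refine ⟨s, hsmem.2, ?_⟩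
    by_contra hlt
    push_neg at hlt
    obtain ⟨j, hj⟩ := exists_nat_one_div_lt (sub_pos.2 hlt)
    obtain ⟨q, hq⟩ := h j
    have hmem : min (Real.toNNReal q) a ∈ Icc (0:ℝ≥0) a := ⟨zero_le, min_le_right _ _⟩
    have := hmax hmem
    simp only [Set.mem_setOf_eq] at this
    have hj' : (1:ℝ) / (j + 1) < v - M s ω := hj
    linarith [this, hq]

lemma measurableSet_exists_le {m0 : MeasurableSpace Ω} (ℱ : Filtration ℝ≥0 m0)
    (hA : Adapted ℱ M) (hc : ∀ ω, Continuous fun t => M t ω) (v : ℝ) (a : ℝ≥0) :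
    MeasurableSet[ℱ a] {ω | ∃ s ≤ a, v ≤ M s ω} := by
  have hset : {ω | ∃ s ≤ a, v ≤ M s ω} =
      ⋂ j : ℕ, ⋃ q : ℚ, {ω | v - 1 / (j + 1) < M (min (Real.toNNReal q) a) ω} := by
    ext ω
    simp only [Set.mem_setOf_eq, Set.mem_iInter, Set.mem_iUnion, exists_le_iff (hc ω) a]
  rw [hset]
  refine MeasurableSet.iInter fun j => MeasurableSet.iUnion fun q => ?_
  have h2 : Measurable[ℱ a] (M (min (Real.toNNReal q) a)) :=
    ((hA _).mono (ℱ.mono (min_le_right _ _)) le_rfl)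
  exact measurableSet_lt measurable_const h2

lemma measurableSet_Bset {m0 : MeasurableSpace Ω} (ℱ : Filtration ℝ≥0 m0)
    (hA : Adapted ℱ M) (hc : ∀ ω, Continuous fun t => M t ω) (v : ℝ) :
    MeasurableSet (Bset M v) := by
  have hset : Bset M v = ⋃ k : ℕ, {ω | ∃ s ≤ (k:ℝ≥0), v ≤ M s ω} := by
    ext ω
    constructor
    · rintro ⟨s, hs⟩
      exact Set.mem_iUnion.2 ⟨⌈s⌉₊, s, Nat.le_ceil s, hs⟩
    · rintro h
      obtain ⟨k, s, _, hs⟩ := Set.mem_iUnion.1 h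
      exact ⟨s, hs⟩
  rw [hset]
  exact MeasurableSet.iUnion fun k => (ℱ.le _ _ (measurableSet_exists_le ℱ hA hc v k))

noncomputable def gceil (k : ℕ) (x : ℝ≥0) : ℝ≥0 := (⌈x * (k + 1)⌉₊ : ℝ≥0) / (k + 1)

open Classical in
/-- capped, discretized hitting time -/
noncomputable def tau (M : ℝ≥0 → Ω → ℝ) (v : ℝ) (k : ℕ) (ω : Ω) : ℝ≥0 :=
  if ω ∈ Bset M v then min (gceil k (rho M v ω)) k else k

lemma kpos (k : ℕ) : (0:ℝ≥0) < (k:ℝ≥0) + 1 := by positivity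

lemma le_gceil (k : ℕ) (x : ℝ≥0) : x ≤ gceil k x := by
  rw [gceil, le_div_iff₀ (kpos k)]
  exact Nat.le_ceil _

lemma gceil_le (k : ℕ) (x : ℝ≥0) : gceil k x ≤ x + 1 / (k + 1) := by
  rw [gceil, div_le_iff₀ (kpos k), add_mul, div_mul_cancel₀ _ (kpos k).ne']
  exact le_of_lt (Nat.ceil_lt_add_one (zero_le))

lemma tendsto_gceil (x : ℝ≥0) : Tendsto (fun k => gceil k x) atTop (𝓝 x) := by
  have h1 : Tendsto (fun k : ℕ => x + 1 / ((k:ℝ≥0) + 1)) atTop (𝓝 (x + 0)) := by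
    refine Tendsto.const_add x ?_
    simp_rw [one_div]
    exact tendsto_const_div_atTop_nhds_zero_nat 1 |>.comp (tendsto_add_atTop_nat 1) |>.congr
      (by intro n; simp)
  rw [add_zero] at h1
  exact tendsto_of_tendsto_of_tendsto_of_le_of_le tendsto_const_nhds h1
    (fun k => le_gceil k x) (fun k => gceil_le k x)

lemma gceil_le_iff (k : ℕ) (x t : ℝ≥0) :
    gceil k x ≤ t ↔ x ≤ (⌊t * (k + 1)⌋₊ : ℝ≥0) / (k + 1) := by
  rw [gceil, div_le_iff₀ (kpos k), le_div_iff₀ (kpos k)]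
  constructor
  · intro h
    calc x * (k+1) ≤ (⌈x * (k+1)⌉₊ : ℝ≥0) := Nat.le_ceil _
    _ ≤ (⌊t * (k+1)⌋₊ : ℝ≥0) := by
        exact_mod_cast Nat.le_floor h
  · intro h
    calc (⌈x * (k+1)⌉₊ : ℝ≥0) ≤ (⌊t * (k+1)⌋₊ : ℝ≥0) := by
          exact_mod_cast Nat.ceil_le.2 h
    _ ≤ t * (k+1) := Nat.floor_le (zero_le)

lemma gfloor_le (k : ℕ) (t : ℝ≥0) : (⌊t * (k + 1)⌋₊ : ℝ≥0) / (k + 1) ≤ t := by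
  rw [div_le_iff₀ (kpos k)]
  exact Nat.floor_le (zero_le)


lemma tau_le_nat (k : ℕ) (ω : Ω) : tau M v k ω ≤ (k:ℝ≥0) := by
  rw [tau]; split_ifs
  · exact min_le_right _ _
  · exact le_rfl

lemma isStoppingTime_tau {m0 : MeasurableSpace Ω} (ℱ : Filtration ℝ≥0 m0)
    (hA : Adapted ℱ M) (hc : ∀ ω, Continuous fun t => M t ω) (v : ℝ) (k : ℕ) :
    IsStoppingTime ℱ (fun ω => (tau M v k ω : WithTop ℝ≥0)) := by
  intro t
  simp only [WithTop.coe_le_coe]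
  by_cases hkt : (k:ℝ≥0) ≤ t
  · have : {ω | tau M v k ω ≤ t} = Set.univ :=
      Set.eq_univ_of_forall fun ω => le_trans (tau_le_nat k ω) hkt
    rw [this]; exact MeasurableSet.univ
  · push_neg at hkt
    have hset : {ω | tau M v k ω ≤ t} =
        {ω | ∃ s ≤ (⌊t * (k + 1)⌋₊ : ℝ≥0) / (k + 1), v ≤ M s ω} := by
      ext ω
      simp only [Set.mem_setOf_eq, tau]
      split_ifs with hB
      · constructor
        · intro h
          have hg : gceil k (rho M v ω) ≤ t := by
            rcases min_cases (gceil k (rho M v ω)) (k:ℝ≥0) with ⟨heq, _⟩ | ⟨heq, hle⟩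
            · rwa [heq] at h
            · rw [heq] at h; exact absurd h (not_le.2 hkt)
          exact ⟨rho M v ω, (gceil_le_iff k _ t).1 hg, rho_mem (hc ω) hB⟩
        · rintro ⟨s, hs, hvs⟩
          refine le_trans (min_le_left _ _) ?_
          exact (gceil_le_iff k _ t).2 (le_trans (rho_le_of hvs) hs)
      · constructor
        · intro h; exact absurd h (not_le.2 hkt)
        · rintro ⟨s, _, hvs⟩; exact absurd ⟨s, hvs⟩ hB
    rw [hset]
    exact ℱ.mono (gfloor_le k t) _ (measurableSet_exists_le ℱ hA hc v _)

lemma countable_range_tau (k : ℕ) :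
    (Set.range (tau M v k)).Countable := by
  refine Set.Countable.mono ?_
    (Set.countable_range fun p : ℕ × ℕ => min ((p.1 : ℝ≥0) / (k + 1)) ((p.2 : ℝ≥0)))
  rintro x ⟨ω, rfl⟩
  rw [tau]
  split_ifs with hB
  · exact ⟨⟨⌈rho M v ω * (k+1)⌉₊, k⟩, rfl⟩
  · exact ⟨⟨(k+1)*(k+1), k⟩, by simp [mul_div_assoc, div_self (kpos k).ne']⟩




lemma bddAbove_range_path {M : ℝ≥0 → Ω → ℝ} {ω : Ω} (hc : Continuous fun t => M t ω)
    {L : ℝ} (hω : Tendsto (fun t => M t ω) atTop (𝓝 L)) :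
    BddAbove (Set.range fun t => M t ω) := by
  obtain ⟨T, hT⟩ := (Metric.tendsto_nhds.1 hω 1 one_pos).exists_forall_of_atTop
  obtain ⟨s₀, _, hmax⟩ := isCompact_Icc.exists_isMaxOn
    (⟨0, by simp⟩ : (Icc (0:ℝ≥0) T).Nonempty) hc.continuousOn
  refine ⟨max (M s₀ ω) (L + 1), ?_⟩
  rintro x ⟨t, rfl⟩
  rcases le_or_gt t T with h | h
  · exact le_max_of_le_left (hmax ⟨zero_le, h⟩)
  · refine le_max_of_le_right ?_
    have := hT t h.le
    rw [Real.dist_eq, abs_lt] at this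
    linarith [this.1]

section Prob

variable {m0 : MeasurableSpace Ω} (P : Measure Ω) [IsProbabilityMeasure P]
  (ℱ : Filtration ℝ≥0 m0) (M : ℝ≥0 → Ω → ℝ) (Minf : Ω → ℝ)

theorem key
    (hmart : Martingale M ℱ P)
    (hcont : ∀ ω, Continuous fun t => M t ω)
    (hUI : UniformIntegrable M 1 P)
    (hM0 : ∀ ω, M 0 ω = 0)
    (hlim : ∀ᵐ ω ∂P, Tendsto (fun t => M t ω) atTop (𝓝 (Minf ω)))
    (u : ℝ) (hu : 0 < u) :
    ∀ᵐ ω ∂P, (⨆ t, M t ω) = u → Minf ω = u := by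
  -- Step 1 : L1 limit theory
  have hcastT : Tendsto (fun k : ℕ => (k : ℝ≥0)) atTop atTop := tendsto_natCast_atTop_atTop
  have hseq_ae : ∀ᵐ ω ∂P, Tendsto (fun k : ℕ => M k ω) atTop (𝓝 (Minf ω)) :=
    hlim.mono fun ω h => h.comp hcastT
  have hUIseq : UniformIntegrable (fun k : ℕ => M k) 1 P := by
    obtain ⟨h1, h2, C, hC⟩ := hUI
    refine ⟨fun k => h1 _, fun ε hε => ?_, C, fun k => hC _⟩
    obtain ⟨δ, hδ, h⟩ := h2 hε
    exact ⟨δ, hδ, fun k s hs hμs => h _ s hs hμs⟩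
  obtain ⟨hMinfMem, _⟩ := stmt19_vitali hUIseq hseq_ae
  have hMinfInt : Integrable Minf P := memLp_one_iff_integrable.mp hMinfMem
  have hL1 : Tendsto (fun k : ℕ => eLpNorm (M k - Minf) 1 P) atTop (𝓝 0) :=
    tendsto_Lp_finite_of_tendsto_ae le_rfl ENNReal.one_ne_top (fun k => hUI.1 _)
      hMinfMem hUIseq.2.1 hseq_ae
  -- Step 2 : the martingale is closed by Minf
  have hclose : ∀ t : ℝ≥0, M t =ᵐ[P] P[Minf | ℱ t] := by
    intro t
    have hbound : ∀ k : ℕ, t ≤ (k:ℝ≥0) →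
        eLpNorm (M t - P[Minf | ℱ t]) 1 P ≤ eLpNorm (M (k:ℝ≥0) - Minf) 1 P := by
      intro k hk
      have e1 : M t - P[Minf | ℱ t] =ᵐ[P] P[M (k:ℝ≥0) - Minf | ℱ t] := by
        have e2 := (condExp_sub (hmart.integrable (k:ℝ≥0)) hMinfInt (m := ℱ t) (μ := P))
        refine EventuallyEq.trans ?_ e2.symm
        exact EventuallyEq.sub (hmart.condExp_ae_eq hk).symm EventuallyEq.rfl
      calc eLpNorm (M t - P[Minf | ℱ t]) 1 P
          = eLpNorm (P[M (k:ℝ≥0) - Minf | ℱ t]) 1 P := eLpNorm_congr_ae e1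
        _ ≤ eLpNorm (M (k:ℝ≥0) - Minf) 1 P := eLpNorm_one_condExp_le_eLpNorm _
    have hzero : eLpNorm (M t - P[Minf | ℱ t]) 1 P = 0 := by
      refine le_antisymm ?_ (zero_le)
      refine ge_of_tendsto hL1 ?_
      filter_upwards [eventually_ge_atTop ⌈(t:ℝ≥0)⌉₊] with k hk
      exact hbound k (le_trans (Nat.le_ceil _) (by exact_mod_cast hk))
    have hsub : M t - P[Minf | ℱ t] =ᵐ[P] 0 := by
      refine (eLpNorm_eq_zero_iff ?_ one_ne_zero).1 hzero
      exact (((hmart.stronglyAdapted t).mono (ℱ.le t)).aestronglyMeasurable).sub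
        ((stronglyMeasurable_condExp.mono (ℱ.le t)).aestronglyMeasurable)
    filter_upwards [hsub] with ω hω
    have h' : M t ω - (P[Minf | ℱ t]) ω = 0 := by simpa using hω
    linarith
  -- integrals of M are zero, hence so is that of Minf
  have hIntTend := (stmt19_vitali hUIseq hseq_ae).2
  have hEM : ∀ k : ℕ, ∫ ω, M (k:ℝ≥0) ω ∂P = 0 := by
    intro k
    have h1 : ∫ ω, (P[M (k:ℝ≥0) | ℱ 0]) ω ∂P = ∫ ω, M (k:ℝ≥0) ω ∂P :=
      integral_condExp (ℱ.le 0)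
    rw [← h1, integral_congr_ae (hmart.condExp_ae_eq (zero_le))]
    simp [hM0]
  have hEMinf : ∫ ω, Minf ω ∂P = 0 := by
    have h2 : Tendsto (fun _ : ℕ => (0:ℝ)) atTop (𝓝 (∫ ω, Minf ω ∂P)) := by
      refine hIntTend.congr fun k => ?_
      exact hEM k
    exact tendsto_nhds_unique h2 tendsto_const_nhds
  -- Step 3 : the hitting identity at every level v > 0
  have hA := hmart.stronglyAdapted.adapted
  have hkey : ∀ v : ℝ, 0 < v →
      ∫ ω, (Bset M v).indicator (fun ω => v - Minf ω) ω ∂P = 0 := by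
    intro v hv
    have hBmeas : MeasurableSet (Bset M v) := measurableSet_Bset ℱ hA hcont v
    have hst : ∀ k : ℕ, IsStoppingTime ℱ (fun ω => (tau M v k ω : WithTop ℝ≥0)) := fun k =>
      isStoppingTime_tau ℱ hA hcont v k
    have hτle : ∀ k : ℕ, ∀ ω, (tau M v k ω : WithTop ℝ≥0) ≤ ((k : ℕ) : ℝ≥0) := fun k ω =>
      WithTop.coe_le_coe.2 (tau_le_nat k ω)
    set F : ℕ → Ω → ℝ := fun k => stoppedValue M (fun ω => (tau M v k ω : WithTop ℝ≥0)) with hF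
    have hOS : ∀ k : ℕ, F k =ᵐ[P] P[Minf | (hst k).measurableSpace] := by
      intro k
      have h1 : F k =ᵐ[P] P[M ((k:ℕ):ℝ≥0) | (hst k).measurableSpace] :=
        hmart.stoppedValue_ae_eq_condExp_of_le_const_of_countable_range (hst k) (hτle k)
          (((countable_range_tau k).image ((↑) : ℝ≥0 → WithTop ℝ≥0)).mono
            (by rintro _ ⟨ω, rfl⟩; exact ⟨_, ⟨ω, rfl⟩, rfl⟩))
      refine h1.trans ?_
      refine (condExp_congr_ae (hclose ((k:ℕ):ℝ≥0))).trans ?_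
      exact condExp_condExp_of_le ((hst k).measurableSpace_le_of_le_const (hτle k))
        (ℱ.le ((k:ℕ):ℝ≥0))
    have h𝒜le : ∀ k : ℕ, (hst k).measurableSpace ≤ m0 := fun k =>
      (hst k).measurableSpace_le_of_le (hτle k)
    have hUIC := hMinfInt.uniformIntegrable_condExp h𝒜le
    have hUIF : UniformIntegrable F 1 P := by
      obtain ⟨hm1, hm2, C, hC⟩ := hUIC
      refine ⟨fun k => (hm1 k).congr (hOS k).symm, hm2.ae_eq fun k => (hOS k).symm, C, fun k => ?_⟩
      rw [eLpNorm_congr_ae (hOS k)]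
      exact hC k
    have hFint : ∀ k : ℕ, ∫ ω, F k ω ∂P = 0 := by
      intro k
      rw [integral_congr_ae (hOS k), integral_condExp (h𝒜le k)]
      exact hEMinf
    set g : Ω → ℝ := fun ω => (Bset M v).indicator (fun ω => v - Minf ω) ω + Minf ω with hg
    have hFlim : ∀ᵐ ω ∂P, Tendsto (fun k => F k ω) atTop (𝓝 (g ω)) := by
      filter_upwards [hlim] with ω hω
      by_cases hB : ω ∈ Bset M v
      · have hgω : g ω = v := by simp [hg, Set.indicator_of_mem hB]
        rw [hgω]
        have hρ : M (rho M v ω) ω = v := rho_eq (hcont ω) (hM0 ω) hv hB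
        have h1 : Tendsto (fun k : ℕ => M (gceil k (rho M v ω)) ω) atTop (𝓝 v) := by
          have h1' : Tendsto (fun k : ℕ => M (gceil k (rho M v ω)) ω) atTop
              (𝓝 (M (rho M v ω) ω)) := ((hcont ω).tendsto _).comp (tendsto_gceil _)
          rwa [hρ] at h1'
        refine Tendsto.congr' ?_ h1
        filter_upwards [eventually_ge_atTop (⌈rho M v ω⌉₊ + 1)] with k hk
        have h2 : rho M v ω + 1 ≤ (k:ℝ≥0) := by
          have h3 : ((⌈rho M v ω⌉₊ + 1 : ℕ) : ℝ≥0) ≤ (k:ℝ≥0) := by exact_mod_cast hk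
          refine le_trans ?_ h3
          push_cast
          exact add_le_add_left (Nat.le_ceil _) 1
        have hle : gceil k (rho M v ω) ≤ (k:ℝ≥0) := by
          refine le_trans (gceil_le k _) (le_trans ?_ h2)
          refine add_le_add_right ?_ _
          rw [div_le_one (kpos k)]
          simp
        show M (gceil k (rho M v ω)) ω = F k ω
        simp only [hF, stoppedValue, tau, if_pos hB, min_eq_left hle, WithTop.untopA, WithTop.untopD_coe]
      · have hgω : g ω = Minf ω := by simp [hg, Set.indicator_of_notMem hB]
        rw [hgω]
        refine (hω.comp hcastT).congr fun k => ?_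
        simp only [hF, stoppedValue, tau, if_neg hB, Function.comp, WithTop.untopA, WithTop.untopD_coe]
    obtain ⟨hgMem, hgTend⟩ := stmt19_vitali hUIF hFlim
    have hg0 : ∫ ω, g ω ∂P = 0 := by
      have h2 : Tendsto (fun _ : ℕ => (0:ℝ)) atTop (𝓝 (∫ ω, g ω ∂P)) := by
        refine hgTend.congr fun k => hFint k
      exact tendsto_nhds_unique h2 tendsto_const_nhds
    have hInd : Integrable ((Bset M v).indicator (fun ω => v - Minf ω)) P :=
      ((integrable_const v).sub hMinfInt).indicator hBmeas
    have hsplit : ∫ ω, g ω ∂P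
        = ∫ ω, (Bset M v).indicator (fun ω => v - Minf ω) ω ∂P + ∫ ω, Minf ω ∂P := by
      rw [hg, integral_add hInd hMinfInt]
    rw [hsplit, hEMinf, add_zero] at hg0
    exact hg0
  -- Step 5 : approach the level u from below and above
  set v : ℕ → ℝ := fun j => u - u / (j + 2) with hvdef
  set w : ℕ → ℝ := fun j => u + 1 / (j + 1) with hwdef
  have hvpos : ∀ j : ℕ, 0 < v j := by
    intro j
    have h1 : u / ((j:ℝ) + 2) < u := div_lt_self hu
      (by have := Nat.cast_nonneg (α := ℝ) j; linarith)
    simp only [hvdef]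
    linarith
  have hvlt : ∀ j : ℕ, v j < u := by
    intro j
    have h1 : 0 < u / ((j:ℝ) + 2) := by positivity
    simp only [hvdef]; linarith
  have hwgt : ∀ j : ℕ, u < w j := by
    intro j
    have h1 : 0 < 1 / ((j:ℝ) + 1) := by positivity
    simp only [hwdef]; linarith
  have hwle : ∀ j : ℕ, w j ≤ u + 1 := by
    intro j
    have h1 : 1 / ((j:ℝ) + 1) ≤ 1 := by
      rw [div_le_one (by positivity)]; norm_num
    simp only [hwdef]; linarith
  have hvmono : Monotone v := by
    intro i j hij
    have h2 : u / ((j:ℝ) + 2) ≤ u / ((i:ℝ) + 2) := by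
      apply div_le_div_of_nonneg_left hu.le (by positivity)
      exact_mod_cast by omega
    simp only [hvdef]; linarith
  have hwanti : Antitone w := by
    intro i j hij
    have h2 : 1 / ((j:ℝ) + 1) ≤ 1 / ((i:ℝ) + 1) := by
      apply div_le_div_of_nonneg_left one_pos.le (by positivity)
      exact_mod_cast by omega
    simp only [hwdef]; linarith
  have hvtend : Tendsto v atTop (𝓝 u) := by
    have h1 : Tendsto (fun j : ℕ => u / ((j:ℝ) + 2)) atTop (𝓝 0) := by
      apply Tendsto.div_atTop tendsto_const_nhds
      exact tendsto_atTop_add_const_right _ 2 tendsto_natCast_atTop_atTop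
    have h2 : Tendsto (fun j : ℕ => u - u / ((j:ℝ) + 2)) atTop (𝓝 (u - 0)) :=
      tendsto_const_nhds.sub h1
    rw [sub_zero] at h2
    exact h2
  have hwtend : Tendsto w atTop (𝓝 u) := by
    have h1 : Tendsto (fun j : ℕ => 1 / ((j:ℝ) + 1)) atTop (𝓝 0) := by
      apply Tendsto.div_atTop tendsto_const_nhds
      exact tendsto_atTop_add_const_right _ 1 tendsto_natCast_atTop_atTop
    have h2 : Tendsto (fun j : ℕ => u + 1 / ((j:ℝ) + 1)) atTop (𝓝 (u + 0)) :=
      tendsto_const_nhds.add h1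
    rw [add_zero] at h2
    exact h2
  have hBmono : ∀ {a b : ℝ}, a ≤ b → Bset M b ⊆ Bset M a := by
    rintro a b hab ω ⟨s, hs⟩
    exact ⟨s, le_trans hab hs⟩
  set D : Set Ω := ⋂ j, Bset M (v j) with hDdef
  set O : Set Ω := ⋃ j, Bset M (w j) with hOdef
  have hDmeas : MeasurableSet D := MeasurableSet.iInter fun j => measurableSet_Bset ℱ hA hcont _
  have hOmeas : MeasurableSet O := MeasurableSet.iUnion fun j => measurableSet_Bset ℱ hA hcont _
  have hOD : O ⊆ D := by
    intro ω hω
    obtain ⟨j, s, hs⟩ := Set.mem_iUnion.1 hω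
    exact Set.mem_iInter.2 fun i => ⟨s, le_trans (le_trans (hvlt i).le (hwgt j).le) hs⟩
  have hbound_int : Integrable (fun ω => (u + 1) + |Minf ω|) P :=
    (integrable_const _).add hMinfInt.abs
  -- dominated convergence from below
  have hDint : ∫ ω, D.indicator (fun ω => u - Minf ω) ω ∂P = 0 := by
    have htend : Tendsto (fun j => ∫ ω, (Bset M (v j)).indicator (fun ω => v j - Minf ω) ω ∂P)
        atTop (𝓝 (∫ ω, D.indicator (fun ω => u - Minf ω) ω ∂P)) := by
      refine tendsto_integral_of_dominated_convergence _ ?_ hbound_int ?_ ?_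
      · intro j
        exact (((integrable_const _).sub hMinfInt).indicator
          (measurableSet_Bset ℱ hA hcont _)).aestronglyMeasurable
      · intro j
        refine Eventually.of_forall fun ω => ?_
        by_cases hB : ω ∈ Bset M (v j)
        · rw [Set.indicator_of_mem hB, Real.norm_eq_abs]
          have h1 : |v j - Minf ω| ≤ |v j| + |Minf ω| := by
            rw [sub_eq_add_neg]
            exact (abs_add_le _ _).trans (by rw [abs_neg])
          have h2 : |v j| ≤ u + 1 := by
            rw [abs_of_pos (hvpos j)]
            linarith [hvlt j]
          linarith
        · rw [Set.indicator_of_notMem hB]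
          have h3 : (0:ℝ) ≤ |Minf ω| := abs_nonneg _
          simp only [norm_zero]
          linarith
      · refine Eventually.of_forall fun ω => ?_
        by_cases hD : ω ∈ D
        · have h1 : ∀ j, ω ∈ Bset M (v j) := Set.mem_iInter.1 hD
          simp only [Set.indicator_of_mem hD, Set.indicator_of_mem, h1]
          exact hvtend.sub tendsto_const_nhds
        · obtain ⟨j0, hj0⟩ : ∃ j0, ω ∉ Bset M (v j0) := by
            by_contra hcon
            push_neg at hcon
            exact hD (Set.mem_iInter.2 hcon)
          rw [Set.indicator_of_notMem hD]
          refine Tendsto.congr' ?_ tendsto_const_nhds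
          filter_upwards [eventually_ge_atTop j0] with j hj
          have : ω ∉ Bset M (v j) := fun hmem => hj0 (hBmono (hvmono hj) hmem)
          rw [Set.indicator_of_notMem this]
    have hzeros : ∀ j : ℕ, ∫ ω, (Bset M (v j)).indicator (fun ω => v j - Minf ω) ω ∂P = 0 :=
      fun j => hkey (v j) (hvpos j)
    have h2 : Tendsto (fun _ : ℕ => (0:ℝ)) atTop
        (𝓝 (∫ ω, D.indicator (fun ω => u - Minf ω) ω ∂P)) := by
      refine htend.congr fun j => hzeros j
    exact tendsto_nhds_unique h2 tendsto_const_nhds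
  -- dominated convergence from above
  have hOint : ∫ ω, O.indicator (fun ω => u - Minf ω) ω ∂P = 0 := by
    have htend : Tendsto (fun j => ∫ ω, (Bset M (w j)).indicator (fun ω => w j - Minf ω) ω ∂P)
        atTop (𝓝 (∫ ω, O.indicator (fun ω => u - Minf ω) ω ∂P)) := by
      refine tendsto_integral_of_dominated_convergence _ ?_ hbound_int ?_ ?_
      · intro j
        exact (((integrable_const _).sub hMinfInt).indicator
          (measurableSet_Bset ℱ hA hcont _)).aestronglyMeasurable
      · intro j
        refine Eventually.of_forall fun ω => ?_
        by_cases hB : ω ∈ Bset M (w j)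
        · rw [Set.indicator_of_mem hB, Real.norm_eq_abs]
          have h1 : |w j - Minf ω| ≤ |w j| + |Minf ω| := by
            rw [sub_eq_add_neg]
            exact (abs_add_le _ _).trans (by rw [abs_neg])
          have h2 : |w j| ≤ u + 1 := by
            rw [abs_of_pos (lt_trans hu (hwgt j))]
            exact hwle j
          linarith
        · rw [Set.indicator_of_notMem hB]
          have h3 : (0:ℝ) ≤ |Minf ω| := abs_nonneg _
          simp only [norm_zero]
          linarith
      · refine Eventually.of_forall fun ω => ?_
        by_cases hO : ω ∈ O
        · obtain ⟨j0, hj0⟩ := Set.mem_iUnion.1 hO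
          rw [Set.indicator_of_mem hO]
          have hev : ∀ j ≥ j0, ω ∈ Bset M (w j) := fun j hj => hBmono (hwanti hj) hj0
          refine Tendsto.congr' ?_ (hwtend.sub tendsto_const_nhds)
          filter_upwards [eventually_ge_atTop j0] with j hj
          rw [Set.indicator_of_mem (hev j hj)]
        · have h1 : ∀ j, ω ∉ Bset M (w j) := fun j hmem => hO (Set.mem_iUnion.2 ⟨j, hmem⟩)
          rw [Set.indicator_of_notMem hO]
          refine Tendsto.congr' ?_ tendsto_const_nhds
          refine Eventually.of_forall fun j => ?_
          exact (Set.indicator_of_notMem (h1 j) _).symm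
    have h2 : Tendsto (fun _ : ℕ => (0:ℝ)) atTop
        (𝓝 (∫ ω, O.indicator (fun ω => u - Minf ω) ω ∂P)) := by
      refine htend.congr fun j => (hkey (w j) (lt_trans hu (hwgt j)))
    exact tendsto_nhds_unique h2 tendsto_const_nhds
  -- Step 6 : the difference event
  have hDOmeas : MeasurableSet (D \ O) := hDmeas.diff hOmeas
  have hIndD : Integrable (D.indicator (fun ω => u - Minf ω)) P :=
    ((integrable_const _).sub hMinfInt).indicator hDmeas
  have hIndO : Integrable (O.indicator (fun ω => u - Minf ω)) P :=
    ((integrable_const _).sub hMinfInt).indicator hOmeas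
  have hdiffInt : ∫ ω in D \ O, (u - Minf ω) ∂P = 0 := by
    have heq : (D \ O).indicator (fun ω => u - Minf ω)
        = D.indicator (fun ω => u - Minf ω) - O.indicator (fun ω => u - Minf ω) :=
      Set.indicator_sdiff hOD _
    rw [← integral_indicator hDOmeas, heq]
    simp only [Pi.sub_apply]
    rw [integral_sub hIndD hIndO, hDint, hOint, sub_zero]
  -- Step 7 : conclusion
  have hnn : 0 ≤ᵐ[P.restrict (D \ O)] fun ω => u - Minf ω := by
    rw [EventuallyLE, ae_restrict_iff' hDOmeas]
    filter_upwards [hlim] with ω hω hmem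
    have h1 : ∀ s, M s ω ≤ u := by
      intro s
      have h2 : ∀ j, M s ω < w j := by
        intro j
        by_contra hcon
        push_neg at hcon
        exact hmem.2 (Set.mem_iUnion.2 ⟨j, ⟨s, hcon⟩⟩)
      exact ge_of_tendsto hwtend (Eventually.of_forall fun j => (h2 j).le)
    have h3 : Minf ω ≤ u := le_of_tendsto hω (Eventually.of_forall h1)
    simp only [Pi.zero_apply]
    linarith
  have hIntOn : Integrable (fun ω => u - Minf ω) (P.restrict (D \ O)) :=
    ((integrable_const _).sub hMinfInt).restrict
  have hzero_ae := (integral_eq_zero_iff_of_nonneg_ae hnn hIntOn).1 hdiffInt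
  have himp : ∀ᵐ ω ∂P, ω ∈ D \ O → u - Minf ω = 0 := by
    have := (ae_restrict_iff' hDOmeas).1 hzero_ae
    filter_upwards [this] with ω hω hmem
    exact hω hmem
  filter_upwards [himp, hlim] with ω h1 hω hSup
  have hbdd : BddAbove (Set.range fun t => M t ω) := bddAbove_range_path (hcont ω) hω
  have hD : ω ∈ D := by
    refine Set.mem_iInter.2 fun j => ?_
    have h2 : v j < ⨆ t, M t ω := by rw [hSup]; exact hvlt j
    obtain ⟨t, ht⟩ := exists_lt_of_lt_ciSup h2
    exact ⟨t, ht.le⟩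
  have hO : ω ∉ O := by
    intro hmem
    obtain ⟨j, s, hs⟩ := Set.mem_iUnion.1 hmem
    have h2 : M s ω ≤ u := by rw [← hSup]; exact le_ciSup hbdd s
    linarith [hwgt j]
  have h4 := h1 ⟨hD, hO⟩
  linarith



end Prob
end Stmt19Aux

lemma stmt19_iInf_eq (f : ℝ≥0 → ℝ) : (⨅ t, f t) = -⨆ t, -f t := by
  have h := Real.iInf_mul_of_nonpos (by norm_num : (-1:ℝ) ≤ 0) f
  simp only [mul_neg, mul_one] at h
  linarith [h]

theorem stmt19 {Ω : Type*} {m0 : MeasurableSpace Ω} (P : Measure Ω)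
    [IsProbabilityMeasure P] (ℱ : Filtration ℝ≥0 m0)
    (M : ℝ≥0 → Ω → ℝ) (Minf : Ω → ℝ)
    (hmart : Martingale M ℱ P)
    (hcont : ∀ ω, Continuous fun t => M t ω)
    (hUI : UniformIntegrable M 1 P)
    (hM0 : ∀ ω, M 0 ω = 0)
    (hlim : ∀ᵐ ω ∂P, Tendsto (fun t => M t ω) atTop (𝓝 (Minf ω)))
    (lb ub : ℝ) (hlb : lb < 0) (hub : 0 < ub)
    (hdisc : P {ω | lb < (⨅ t, M t ω) ∧ (⨆ t, M t ω) < ub} <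
      P {ω | lb ≤ (⨅ t, M t ω) ∧ (⨆ t, M t ω) ≤ ub}) :
    (0 < P {ω | lb < (⨅ t, M t ω) ∧ (⨆ t, M t ω) = ub} ∨
      0 < P {ω | (⨅ t, M t ω) = lb ∧ (⨆ t, M t ω) < ub}) ∧
    P {ω | (⨅ t, M t ω) = lb ∧ (⨆ t, M t ω) = ub} = 0 := by
  have hsup := Stmt19Aux.key P ℱ M Minf hmart hcont hUI hM0 hlim ub hub
  have hUIneg : UniformIntegrable (-M) 1 P := by
    obtain ⟨h1, h2, C, hC⟩ := hUI
    refine ⟨fun t => (h1 t).neg, h2.neg, C, fun t => ?_⟩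
    rw [Pi.neg_apply, eLpNorm_neg]
    exact hC t
  have hinf' := Stmt19Aux.key P ℱ (-M) (-Minf) hmart.neg
    (fun ω => (hcont ω).neg) hUIneg (fun ω => by simp [hM0 ω])
    (by filter_upwards [hlim] with ω hω; simpa using hω.neg) (-lb) (by linarith)
  have hinf : ∀ᵐ ω ∂P, (⨅ t, M t ω) = lb → Minf ω = lb := by
    filter_upwards [hinf'] with ω h hI
    have h2 : (⨆ t, (-M) t ω) = -lb := by
      have h3 := stmt19_iInf_eq (fun t => M t ω)
      rw [hI] at h3
      have : (⨆ t, -(M t ω)) = -lb := by linarith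
      simpa using this
    have h4 := h h2
    simp only [Pi.neg_apply] at h4
    linarith
  have hnull : P {ω | (⨅ t, M t ω) = lb ∧ (⨆ t, M t ω) = ub} = 0 := by
    rw [measure_eq_zero_iff_ae_notMem]
    filter_upwards [hsup, hinf] with ω h1 h2 hmem
    obtain ⟨hI, hS⟩ := hmem
    have e1 := h1 hS
    have e2 := h2 hI
    linarith
  refine ⟨?_, hnull⟩
  by_contra hcon
  push_neg at hcon
  obtain ⟨h1, h2⟩ := hcon
  have h1' : P {ω | lb < (⨅ t, M t ω) ∧ (⨆ t, M t ω) = ub} = 0 :=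
    le_antisymm h1 (zero_le)
  have h2' : P {ω | (⨅ t, M t ω) = lb ∧ (⨆ t, M t ω) < ub} = 0 :=
    le_antisymm h2 (zero_le)
  have hsub : {ω | lb ≤ (⨅ t, M t ω) ∧ (⨆ t, M t ω) ≤ ub} ⊆
      {ω | lb < (⨅ t, M t ω) ∧ (⨆ t, M t ω) < ub} ∪
      ({ω | lb < (⨅ t, M t ω) ∧ (⨆ t, M t ω) = ub} ∪
      ({ω | (⨅ t, M t ω) = lb ∧ (⨆ t, M t ω) < ub} ∪
       {ω | (⨅ t, M t ω) = lb ∧ (⨆ t, M t ω) = ub})) := by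
    rintro ω ⟨hI, hS⟩
    rcases lt_or_eq_of_le hI with hI' | hI' <;> rcases lt_or_eq_of_le hS with hS' | hS'
    · exact Or.inl ⟨hI', hS'⟩
    · exact Or.inr (Or.inl ⟨hI', hS'⟩)
    · exact Or.inr (Or.inr (Or.inl ⟨hI'.symm, hS'⟩))
    · exact Or.inr (Or.inr (Or.inr ⟨hI'.symm, hS'⟩))
  have hle : P {ω | lb ≤ (⨅ t, M t ω) ∧ (⨆ t, M t ω) ≤ ub} ≤
      P {ω | lb < (⨅ t, M t ω) ∧ (⨆ t, M t ω) < ub} := by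
    refine (measure_mono hsub).trans ?_
    refine (measure_union_le _ _).trans ?_
    have hz : P ({ω | lb < (⨅ t, M t ω) ∧ (⨆ t, M t ω) = ub} ∪
        ({ω | (⨅ t, M t ω) = lb ∧ (⨆ t, M t ω) < ub} ∪
         {ω | (⨅ t, M t ω) = lb ∧ (⨆ t, M t ω) = ub})) = 0 := by
      refine le_antisymm ((measure_union_le _ _).trans ?_) (zero_le)
      rw [h1', zero_add]
      refine (measure_union_le _ _).trans ?_
      rw [h2', hnull, add_zero]
    rw [hz, add_zero]
  exact absurd hdisc (not_lt.2 hle)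
end
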